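/- Let p ∈ NC(n), let B be a block of p with |B| = r, and let 1 ≤ i ≤ r−1. Then K(p_{B,i}) = K(p)_{C^B, C^B_i}, the partition obtained from K(p) by merging the upper enveloping block C^B of B with the lower enveloping block C^B_i of B. Dually, for a block C of K(p) and 1 ≤ i ≤ |C|−1, K(p)_{C,i} = K(p_{B^C, B^C_i}). -/
import Mathlib


namespace NCPaper

/-- The index set `[n] = {1, …, n}` inside `ℕ`. -/
def Idx (n : ℕ) : Set ℕ := Set.Icc 1 n

/-- `r` is (the equivalence relation of) a partition of the set `S`:
a symmetric, transitive relation on `ℕ` whose domain is exactly `S`.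
For `S ⊆ [n]` this encodes a partial partition of `[n]` with support `S`;
its blocks are the equivalence classes. -/
def IsPartitionOn (S : Set ℕ) (r : ℕ → ℕ → Prop) : Prop :=
  (∀ i j, r i j → r j i) ∧ (∀ i j k, r i j → r j k → r i k) ∧ (∀ i, r i i ↔ i ∈ S)

/-- A partition (relation) is non-crossing if there are no `i < j < k < l`
with `i ∼ k`, `j ∼ l` and `i ≁ j`. -/
def NonCrossing (r : ℕ → ℕ → Prop) : Prop :=
  ∀ i j k l, i < j → j < k → k < l → r i k → r j l → r i j

/-- Refinement order on partitions encoded as relations: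
`r ≤ s` iff every block of `r` is contained in a block of `s`. -/
def RelLE (r s : ℕ → ℕ → Prop) : Prop := ∀ i j, r i j → s i j

/-- Join of two partial partitions with complementary (disjoint) supports:
the partition whose blocks are the blocks of `r` together with those of `s`. -/
def relJoin (r s : ℕ → ℕ → Prop) : ℕ → ℕ → Prop := fun i j => r i j ∨ s i j

/-- `k` lies (weakly) between `i` and `j`, i.e. `k ∈ {min i j, …, max i j}`. -/
def Between (i j k : ℕ) : Prop := min i j ≤ k ∧ k ≤ max i j

/-- The Kreweras complement `kr(r, S)` of the partial partition `(r, S)` of `[n]`: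
the relation with support `[n] \ S` in which `i ∼ j` iff no element `k` of
`{i,…,j} ∩ S` is `r`-equivalent to an element `l` of `S \ {i,…,j}`. -/
def krRel (n : ℕ) (S : Set ℕ) (r : ℕ → ℕ → Prop) : ℕ → ℕ → Prop :=
  fun i j => i ∈ Idx n ∧ j ∈ Idx n ∧ i ∉ S ∧ j ∉ S ∧
    ∀ k l, k ∈ S → l ∈ S → Between i j k → ¬ Between i j l → ¬ r k l

/-- Transport of a relation along a map. -/
def mapRel (f : ℕ → ℕ) (r : ℕ → ℕ → Prop) : ℕ → ℕ → Prop :=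
  fun a b => ∃ i j, f i = a ∧ f j = b ∧ r i j

/-- `i ↦ 2i - δ(i)` where `δ(i) = 1` for odd `i` and `δ(i) = 0` for even `i`;
this maps `[2k]` onto `S = {1,4,5,8,…,4k-3,4k} ⊆ [4k]`. -/
def fS (i : ℕ) : ℕ := 2 * i - i % 2

/-- `i ↦ 2i - (1 - δ(i))`; this maps `[2k]` onto `Sᶜ = {2,3,6,7,…} ⊆ [4k]`. -/
def fSc (i : ℕ) : ℕ := 2 * i - (1 - i % 2)

/-- The nested Kreweras complement `kr′(π)` of a partition `π` of `[2k]`: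
transport `π` along `fS` to a partial partition of `[4k]` with support
`fS '' [2k]`, take its Kreweras complement and transport back along `fSc`. -/
def krNested (k : ℕ) (r : ℕ → ℕ → Prop) : ℕ → ℕ → Prop :=
  fun i j => krRel (4 * k) (fS '' Idx (2 * k)) (mapRel fS r) (fSc i) (fSc j)

/-- `π₀`: the partition of `[2k]` with blocks `{2i, 2i+1}`, indices mod `2k`
(so one block is `{2k, 1}`). -/
def piZero (k : ℕ) : ℕ → ℕ → Prop := fun i j =>
  i ∈ Idx (2 * k) ∧ j ∈ Idx (2 * k) ∧
    (i = j ∨ (Even i ∧ j = i + 1) ∨ (Even j ∧ i = j + 1) ∨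
      (i = 1 ∧ j = 2 * k) ∨ (j = 1 ∧ i = 2 * k))

/-- `π₁`: the partition of `[2k]` with blocks `{2i-1, 2i}`, `1 ≤ i ≤ k`. -/
def piOne (k : ℕ) : ℕ → ℕ → Prop := fun i j =>
  i ∈ Idx (2 * k) ∧ j ∈ Idx (2 * k) ∧
    (i = j ∨ (Odd i ∧ j = i + 1) ∨ (Odd j ∧ i = j + 1))

/-- The `i`-th odd position `2i - 1` in `[2n]`. -/
def oddPos (i : ℕ) : ℕ := 2 * i - 1

/-- The `i`-th even position `2i` in `[2n]`. -/
def evenPos (i : ℕ) : ℕ := 2 * i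

/-- The Kreweras complement `K(p)` of a partition `p` of `[n]`: transport `p`
along `i ↦ 2i-1` to the odd positions `σ = {1,3,…,2n-1}` of `[2n]`, take the
Kreweras complement there, and transport back along `i ↦ 2i`. -/
def Kmap (n : ℕ) (r : ℕ → ℕ → Prop) : ℕ → ℕ → Prop :=
  fun i j => krRel (2 * n) (oddPos '' Idx n) (mapRel oddPos r) (evenPos i) (evenPos j)

/-- `p° = (p̂,σ) ∨ (K̂(p),σᶜ)`: the partition of `[2n]` obtained by placing `p`
on the odd positions and `K(p)` on the even positions. -/
def pCirc (n : ℕ) (p : ℕ → ℕ → Prop) : ℕ → ℕ → Prop :=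
  relJoin (mapRel oddPos p) (mapRel evenPos (Kmap n p))

/-- `F(π)` for `π ≥ π₀`: `i ∼ j` iff `2i-1 ∼_π 2j-1`. -/
def Fmap (r : ℕ → ℕ → Prop) : ℕ → ℕ → Prop := fun i j => r (2 * i - 1) (2 * j - 1)

/-- `G(π)` for `π ≥ π₁`: `i ∼ j` iff `2i ∼_π 2j`. -/
def Gmap (r : ℕ → ℕ → Prop) : ℕ → ℕ → Prop := fun i j => r (2 * i) (2 * j)

/-- `B` is a block of the partition (relation) `r`. -/
def IsBlock (r : ℕ → ℕ → Prop) (B : Set ℕ) : Prop := ∃ i, r i i ∧ B = {j | r i j}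

/-- The number `|r|` of blocks of the partition `r`. -/
noncomputable def numBlocks (r : ℕ → ℕ → Prop) : ℕ := {B : Set ℕ | IsBlock r B}.ncard

/-- `B' ⪯ B` for `B = {i₁<…<i_t}`, `B' = {j₁<…<j_{t'}}`: `i₁ < j₁` and `j_{t'} < i_t`. -/
def Nested (B' B : Set ℕ) : Prop := sInf B < sInf B' ∧ sSup B' < sSup B

/-- The depth `d_p(B)` of a block `B`: the maximal number `m` of blocks in a
chain `B = X₁ ⪯ X₂ ⪯ … ⪯ X_m` of blocks of `p`. -/
noncomputable def depth (p : ℕ → ℕ → Prop) (B : Set ℕ) : ℕ :=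
  sSup {m : ℕ | ∃ c : ℕ → Set ℕ, c 1 = B ∧
    (∀ i, 1 ≤ i → i ≤ m → IsBlock p (c i)) ∧
    (∀ i, 1 ≤ i → i < m → Nested (c i) (c (i + 1)))}

/-- `p_{B,B'}`: the partition obtained from `p` by merging the blocks `B` and `B'`. -/
def mergeRel (p : ℕ → ℕ → Prop) (B B' : Set ℕ) : ℕ → ℕ → Prop :=
  fun i j => p i j ∨ (p i i ∧ p j j ∧ i ∈ B ∪ B' ∧ j ∈ B ∪ B')

/-- Two distinct blocks `B, B'` of `p` are adjacent if replacing them by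
`B ∪ B'` yields a non-crossing partition. -/
def Adjacent (p : ℕ → ℕ → Prop) (B B' : Set ℕ) : Prop :=
  IsBlock p B ∧ IsBlock p B' ∧ B ≠ B' ∧ NonCrossing (mergeRel p B B')

/-- The set of the `i` smallest elements of `B`. -/
def lowerPart (B : Set ℕ) (i : ℕ) : Set ℕ := {x ∈ B | (B ∩ Set.Iic x).ncard ≤ i}

/-- The set of the remaining elements of `B` (all but the `i` smallest). -/
def upperPart (B : Set ℕ) (i : ℕ) : Set ℕ := {x ∈ B | i < (B ∩ Set.Iic x).ncard}

/-- `p_{B,i}`: the partition obtained from `p` by splitting the block `B` into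
the block of its `i` smallest elements and the block of its remaining elements. -/
def splitRel (p : ℕ → ℕ → Prop) (B : Set ℕ) (i : ℕ) : ℕ → ℕ → Prop :=
  fun x y => p x y ∧ ((x ∈ lowerPart B i ∧ y ∈ lowerPart B i) ∨
    (x ∈ upperPart B i ∧ y ∈ upperPart B i) ∨ (x ∉ B ∧ y ∉ B))

/-- The `i`-th smallest element of `B` (1-indexed). -/
noncomputable def nthSmall (B : Set ℕ) (i : ℕ) : ℕ :=
  sInf {x | x ∈ B ∧ (B ∩ Set.Iic x).ncard = i}


/-! ### Auxiliary machinery -/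

section Aux

open Set

/-- `a` lies in the half-open interval `(min x y, max x y]`. -/
def In2 (x y a : ℕ) : Prop := min x y < a ∧ a ≤ max x y

/-- The relation `q` respects the interval determined by `x, y`. -/
def Resp (q : ℕ → ℕ → Prop) (x y : ℕ) : Prop :=
  ∀ a b, q a b → In2 x y a → In2 x y b

/-- Interval form of the Kreweras complement relation. -/
def KI (n : ℕ) (q : ℕ → ℕ → Prop) (x y : ℕ) : Prop :=
  x ∈ Idx n ∧ y ∈ Idx n ∧ Resp q x y

lemma In2_comm {x y a : ℕ} : In2 x y a ↔ In2 y x a := by unfold In2; omega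

lemma Resp_comm {q : ℕ → ℕ → Prop} {x y : ℕ} (h : Resp q x y) : Resp q y x := by
  intro a b hab ha
  rw [← In2_comm] at ha ⊢
  exact h a b hab ha

lemma KI_symm {n q} {x y : ℕ} (h : KI n q x y) : KI n q y x :=
  ⟨h.2.1, h.1, Resp_comm h.2.2⟩

lemma KI_refl {n q} {x : ℕ} (hx : x ∈ Idx n) : KI n q x x := by
  refine ⟨hx, hx, fun a b _ ha => ?_⟩
  unfold In2 at ha; omega

lemma Resp_mono {q q' : ℕ → ℕ → Prop} {x y : ℕ} (h : ∀ a b, q' a b → q a b)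
    (hq : Resp q x y) : Resp q' x y := fun a b hab => hq a b (h a b hab)

/-- Transitivity of the interval Kreweras relation, for symmetric `q`. -/
lemma KI_trans {n q} (hsym : ∀ a b, q a b → q b a) {x y z : ℕ}
    (h1 : KI n q x y) (h2 : KI n q y z) : KI n q x z := by
  refine ⟨h1.1, h2.2.1, fun a b hab ha => ?_⟩
  have r1 := h1.2.2 a b hab
  have r1' := h1.2.2 b a (hsym a b hab)
  have r2 := h2.2.2 a b hab
  have r2' := h2.2.2 b a (hsym a b hab)
  unfold In2 at *
  omega

/-- The interval Kreweras relation is non-crossing. -/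
lemma KI_noncrossing {n q} (hsym : ∀ a b, q a b → q b a) :
    NonCrossing (KI n q) := by
  intro e f g h hef hfg hgh h1 h2
  refine ⟨h1.1, h2.1, fun a b hab ha => ?_⟩
  have r1 := h1.2.2 a b hab
  have r1' := h1.2.2 b a (hsym a b hab)
  have r2 := h2.2.2 a b hab
  have r2' := h2.2.2 b a (hsym a b hab)
  unfold In2 at *
  omega

lemma oddPos_def (a : ℕ) : oddPos a = 2*a - 1 := rfl
lemma evenPos_def (a : ℕ) : evenPos a = 2*a := rfl

/-- Translation: `Kmap n q` coincides with the interval form `KI n q`,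
for a symmetric relation `q` supported in `Idx n`. -/
lemma Kmap_iff_KI {n : ℕ} {q : ℕ → ℕ → Prop}
    (hsupp : ∀ a b, q a b → a ∈ Idx n ∧ b ∈ Idx n)
    (hsym : ∀ a b, q a b → q b a) (x y : ℕ) :
    Kmap n q x y ↔ KI n q x y := by
  constructor
  · rintro ⟨hx, hy, -, -, hall⟩
    simp only [Idx, mem_Icc, evenPos_def] at hx hy
    refine ⟨⟨by omega, by omega⟩, ⟨by omega, by omega⟩, fun a b hab ha => ?_⟩
    obtain ⟨⟨ha1, ha2⟩, hb1, hb2⟩ := hsupp a b hab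
    by_contra hb
    refine hall (oddPos a) (oddPos b) ⟨a, ⟨ha1, ha2⟩, rfl⟩ ⟨b, ⟨hb1, hb2⟩, rfl⟩
      ?_ ?_ ⟨a, b, rfl, rfl, hab⟩
    · unfold Between oddPos evenPos
      unfold In2 at ha; omega
    · unfold Between oddPos evenPos
      unfold In2 at hb; omega
  · rintro ⟨hx, hy, hresp⟩
    simp only [Idx, mem_Icc] at hx hy
    refine ⟨?_, ?_, ?_, ?_, ?_⟩
    · simp only [Idx, mem_Icc, evenPos_def]; omega
    · simp only [Idx, mem_Icc, evenPos_def]; omega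
    · rintro ⟨c, hc, hco⟩
      simp only [Idx, mem_Icc] at hc
      simp only [oddPos, evenPos] at hco; omega
    · rintro ⟨c, hc, hco⟩
      simp only [Idx, mem_Icc] at hc
      simp only [oddPos, evenPos] at hco; omega
    · rintro k l ⟨a, ha, rfl⟩ ⟨b, hb, rfl⟩ hbet hnbet ⟨a', b', ha', hb', hab⟩
      simp only [Idx, mem_Icc] at ha hb
      obtain ⟨⟨ha1, -⟩, hb1, -⟩ := hsupp a' b' hab
      have haa : a' = a := by simp only [oddPos] at ha'; omega
      have hbb : b' = b := by simp only [oddPos] at hb'; omega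
      subst haa; subst hbb
      have := hresp a' b' hab
      unfold Between In2 oddPos evenPos at *
      omega

end Aux

section Aux2
open Set

variable {n : ℕ} {p : ℕ → ℕ → Prop}

lemma block_mem {B : Set ℕ} (hp : IsPartitionOn (Idx n) p) (hB : IsBlock p B) :
    ∃ i0, p i0 i0 ∧ B = {j | p i0 j} := hB

lemma block_rel {B : Set ℕ} (hp : IsPartitionOn (Idx n) p) (hB : IsBlock p B)
    {u v : ℕ} (hu : u ∈ B) (hv : v ∈ B) : p u v := by
  obtain ⟨i0, -, rfl⟩ := hB
  exact hp.2.1 _ _ _ (hp.1 _ _ hu) hv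

lemma block_closed {B : Set ℕ} (hp : IsPartitionOn (Idx n) p) (hB : IsBlock p B)
    {u v : ℕ} (hu : u ∈ B) (huv : p u v) : v ∈ B := by
  obtain ⟨i0, -, rfl⟩ := hB
  exact hp.2.1 _ _ _ hu huv

lemma rel_mem_left {u v : ℕ} (hp : IsPartitionOn (Idx n) p) (huv : p u v) : u ∈ Idx n :=
  (hp.2.2 u).1 (hp.2.1 _ _ _ huv (hp.1 _ _ huv))

lemma rel_mem_right {u v : ℕ} (hp : IsPartitionOn (Idx n) p) (huv : p u v) : v ∈ Idx n :=
  (hp.2.2 v).1 (hp.2.1 _ _ _ (hp.1 _ _ huv) huv)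

lemma block_subset {B : Set ℕ} (hp : IsPartitionOn (Idx n) p) (hB : IsBlock p B) :
    B ⊆ Idx n := by
  intro u hu
  exact rel_mem_left hp (block_rel hp hB hu hu)

lemma block_nonempty {B : Set ℕ} (hp : IsPartitionOn (Idx n) p) (hB : IsBlock p B) :
    B.Nonempty := by
  obtain ⟨i0, h0, rfl⟩ := hB; exact ⟨i0, h0⟩

lemma block_finite {B : Set ℕ} (hp : IsPartitionOn (Idx n) p) (hB : IsBlock p B) :
    B.Finite := (Set.finite_Icc 1 n).subset (block_subset hp hB)

/-! ### `nthSmall` machinery -/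

lemma card_Iic_lt {S : Set ℕ} (hS : S.Finite) {x y : ℕ} (hy : y ∈ S) (hxy : x < y) :
    (S ∩ Iic x).ncard < (S ∩ Iic y).ncard := by
  apply Set.ncard_lt_ncard _ (hS.subset inter_subset_left)
  constructor
  · exact inter_subset_inter_right _ (Iic_subset_Iic.2 (le_of_lt hxy))
  · intro hsub
    have := hsub ⟨hy, mem_Iic.2 le_rfl⟩
    simp only [mem_inter_iff, mem_Iic] at this
    omega

lemma card_Iic_le {S : Set ℕ} (hS : S.Finite) {x y : ℕ} (hxy : x ≤ y) :
    (S ∩ Iic x).ncard ≤ (S ∩ Iic y).ncard :=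
  Set.ncard_le_ncard (inter_subset_inter_right _ (Iic_subset_Iic.2 hxy))
    (hS.subset inter_subset_left)

lemma card_Iic_pos {S : Set ℕ} (hS : S.Finite) {x : ℕ} (hx : x ∈ S) :
    1 ≤ (S ∩ Iic x).ncard := by
  have := (Set.ncard_pos (hS.subset inter_subset_left)).2 ⟨x, hx, mem_Iic.2 le_rfl⟩
  omega

lemma card_Iic_le_card {S : Set ℕ} (hS : S.Finite) (x : ℕ) :
    (S ∩ Iic x).ncard ≤ S.ncard :=
  Set.ncard_le_ncard inter_subset_left hS

lemma nth_exists {S : Set ℕ} (hS : S.Finite) :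
    ∀ i, 1 ≤ i → i ≤ S.ncard → ∃ x ∈ S, (S ∩ Iic x).ncard = i := by
  intro i
  induction i with
  | zero => omega
  | succ i ih =>
    intro _ hle
    rcases Nat.eq_or_lt_of_le (Nat.one_le_iff_ne_zero.2 (Nat.succ_ne_zero i)) with h1 | h1
    · -- i + 1 = 1
      have hne : S.Nonempty := by
        rw [Set.nonempty_iff_ne_empty]; intro h; rw [h] at hle; simp at hle
      refine ⟨sInf S, Nat.sInf_mem hne, ?_⟩
      have : S ∩ Iic (sInf S) = {sInf S} := by
        apply Set.eq_singleton_iff_unique_mem.2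
        refine ⟨⟨Nat.sInf_mem hne, mem_Iic.2 le_rfl⟩, ?_⟩
        rintro y ⟨hy1, hy2⟩
        exact le_antisymm (mem_Iic.1 hy2) (Nat.sInf_le hy1)
      rw [this, Set.ncard_singleton]; omega
    · -- i ≥ 1
      obtain ⟨x, hx, hcard⟩ := ih (by omega) (by omega)
      have hTne : (S ∩ Ioi x).Nonempty := by
        by_contra h
        rw [Set.not_nonempty_iff_eq_empty] at h
        have hsub : S ⊆ S ∩ Iic x := by
          intro y hy
          refine ⟨hy, mem_Iic.2 ?_⟩
          by_contra hgt
          have : y ∈ S ∩ Ioi x := ⟨hy, mem_Ioi.2 (by omega)⟩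
          rw [h] at this
          simp at this
        have := Set.ncard_le_ncard hsub (hS.subset inter_subset_left)
        omega
      set x' := sInf (S ∩ Ioi x) with hx'
      have hx'mem := Nat.sInf_mem hTne
      obtain ⟨hx'S, hx'gt⟩ := hx'mem
      rw [mem_Ioi] at hx'gt
      refine ⟨x', hx'S, ?_⟩
      have heq : S ∩ Iic x' = insert x' (S ∩ Iic x) := by
        ext y
        simp only [mem_inter_iff, mem_Iic, mem_insert_iff]
        constructor
        · rintro ⟨hyS, hyle⟩
          rcases Nat.lt_or_ge x y with h2 | h2
          · left
            have := Nat.sInf_le (s := S ∩ Ioi x) ⟨hyS, mem_Ioi.2 h2⟩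
            omega
          · right; exact ⟨hyS, h2⟩
        · rintro (rfl | ⟨hyS, hyle⟩)
          · exact ⟨hx'S, le_rfl⟩
          · exact ⟨hyS, by omega⟩
      rw [heq, Set.ncard_insert_of_notMem (by
          simp only [mem_inter_iff, mem_Iic]; omega)
        (hS.subset inter_subset_left)]
      omega

lemma nth_spec {S : Set ℕ} (hS : S.Finite) {i : ℕ} (h1 : 1 ≤ i) (h2 : i ≤ S.ncard) :
    nthSmall S i ∈ S ∧ (S ∩ Iic (nthSmall S i)).ncard = i := by
  obtain ⟨x, hx, hcard⟩ := nth_exists hS i h1 h2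
  have : nthSmall S i ∈ {x | x ∈ S ∧ (S ∩ Set.Iic x).ncard = i} :=
    Nat.sInf_mem ⟨x, hx, hcard⟩
  exact this

lemma nth_unique {S : Set ℕ} (hS : S.Finite) {i x : ℕ} (h1 : 1 ≤ i) (h2 : i ≤ S.ncard)
    (hx : x ∈ S) (hcard : (S ∩ Iic x).ncard = i) : x = nthSmall S i := by
  obtain ⟨hmem, hc⟩ := nth_spec hS h1 h2
  rcases Nat.lt_trichotomy x (nthSmall S i) with h | h | h
  · have := card_Iic_lt hS hmem h; omega
  · exact h
  · have := card_Iic_lt hS hx h; omega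

lemma nth_lt_nth {S : Set ℕ} (hS : S.Finite) {i j : ℕ} (h1 : 1 ≤ i) (hij : i < j)
    (h2 : j ≤ S.ncard) : nthSmall S i < nthSmall S j := by
  obtain ⟨hmi, hci⟩ := nth_spec hS h1 (by omega)
  obtain ⟨hmj, hcj⟩ := nth_spec hS (by omega : 1 ≤ j) h2
  rcases Nat.lt_trichotomy (nthSmall S i) (nthSmall S j) with h | h | h
  · exact h
  · rw [h] at hci; omega
  · have := card_Iic_lt hS hmi h; omega

lemma nth_le_nth {S : Set ℕ} (hS : S.Finite) {i j : ℕ} (h1 : 1 ≤ i) (hij : i ≤ j)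
    (h2 : j ≤ S.ncard) : nthSmall S i ≤ nthSmall S j := by
  rcases Nat.eq_or_lt_of_le hij with rfl | h
  · exact le_rfl
  · exact le_of_lt (nth_lt_nth hS h1 h h2)

/-- Every element of `S` is `nthSmall S k` for its rank `k`. -/
lemma mem_eq_nth {S : Set ℕ} (hS : S.Finite) {x : ℕ} (hx : x ∈ S) :
    x = nthSmall S ((S ∩ Iic x).ncard) ∧ 1 ≤ (S ∩ Iic x).ncard ∧
      (S ∩ Iic x).ncard ≤ S.ncard :=
  ⟨nth_unique hS (card_Iic_pos hS hx) (card_Iic_le_card hS x) hx rfl,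
    card_Iic_pos hS hx, card_Iic_le_card hS x⟩

lemma nth_min {S : Set ℕ} (hS : S.Finite) {x : ℕ} (hx : x ∈ S) : nthSmall S 1 ≤ x := by
  obtain ⟨heq, h1, h2⟩ := mem_eq_nth hS hx
  calc nthSmall S 1 ≤ nthSmall S ((S ∩ Iic x).ncard) := nth_le_nth hS le_rfl h1 h2
    _ = x := heq.symm

lemma nth_max {S : Set ℕ} (hS : S.Finite) {x : ℕ} (hx : x ∈ S) : x ≤ nthSmall S S.ncard := by
  obtain ⟨heq, h1, h2⟩ := mem_eq_nth hS hx
  calc x = nthSmall S ((S ∩ Iic x).ncard) := heq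
    _ ≤ nthSmall S S.ncard := nth_le_nth hS h1 h2 le_rfl

/-- No element of `S` lies strictly between consecutive order statistics. -/
lemma nth_gap {S : Set ℕ} (hS : S.Finite) {i x : ℕ} (h1 : 1 ≤ i) (h2 : i + 1 ≤ S.ncard)
    (hx : x ∈ S) (hgt : nthSmall S i < x) : nthSmall S (i+1) ≤ x := by
  obtain ⟨heq, hk1, hk2⟩ := mem_eq_nth hS hx
  have hmi := (nth_spec hS h1 (by omega)).1
  have hci := (nth_spec hS h1 (by omega)).2
  have : i < (S ∩ Iic x).ncard := by
    have := card_Iic_lt hS hx hgt; omega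
  calc nthSmall S (i+1) ≤ nthSmall S ((S ∩ Iic x).ncard) := nth_le_nth hS (by omega) (by omega) hk2
    _ = x := heq.symm

lemma mem_lowerPart_iff {S : Set ℕ} (hS : S.Finite) {i x : ℕ} (h1 : 1 ≤ i)
    (h2 : i ≤ S.ncard) : x ∈ lowerPart S i ↔ x ∈ S ∧ x ≤ nthSmall S i := by
  obtain ⟨hmi, hci⟩ := nth_spec hS h1 h2
  unfold lowerPart
  simp only [mem_setOf_eq]
  constructor
  · rintro ⟨hxS, hxc⟩
    refine ⟨hxS, ?_⟩
    by_contra hgt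
    have := card_Iic_lt hS hxS (by omega : nthSmall S i < x)
    omega
  · rintro ⟨hxS, hle⟩
    exact ⟨hxS, by have := card_Iic_le hS (S := S) hle; omega⟩

lemma mem_upperPart_iff {S : Set ℕ} (hS : S.Finite) {i x : ℕ} (h1 : 1 ≤ i)
    (h2 : i + 1 ≤ S.ncard) : x ∈ upperPart S i ↔ x ∈ S ∧ nthSmall S (i+1) ≤ x := by
  obtain ⟨hmi, hci⟩ := nth_spec hS h1 (by omega)
  obtain ⟨hmi1, hci1⟩ := nth_spec hS (by omega : (1:ℕ) ≤ i+1) h2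
  unfold upperPart
  simp only [mem_setOf_eq]
  constructor
  · rintro ⟨hxS, hxc⟩
    refine ⟨hxS, ?_⟩
    have hgt : nthSmall S i < x := by
      by_contra hle
      have := card_Iic_le hS (S := S) (by omega : x ≤ nthSmall S i)
      omega
    exact nth_gap hS h1 h2 hxS hgt
  · rintro ⟨hxS, hle⟩
    have := card_Iic_le hS (S := S) hle
    exact ⟨hxS, by omega⟩

end Aux2

section Aux3
open Set

/-- chains defining `depth` -/
def chainSet (P : ℕ → ℕ → Prop) (X : Set ℕ) : Set ℕ :=
  {m : ℕ | ∃ c : ℕ → Set ℕ, c 1 = X ∧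
    (∀ i, 1 ≤ i → i ≤ m → IsBlock P (c i)) ∧
    (∀ i, 1 ≤ i → i < m → Nested (c i) (c (i + 1)))}

lemma depth_eq_sSup (P : ℕ → ℕ → Prop) (X : Set ℕ) : depth P X = sSup (chainSet P X) := rfl

lemma chainSet_bdd (P : ℕ → ℕ → Prop) (X : Set ℕ) {m : ℕ} (hm : m ∈ chainSet P X) :
    m ≤ sInf X + 1 := by
  obtain ⟨c, hc1, -, hnest⟩ := hm
  have key : ∀ j, j + 1 ≤ m → sInf (c (j + 1)) + j ≤ sInf (c 1) := by
    intro j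
    induction j with
    | zero => intro _; simp
    | succ j ih =>
      intro hj
      have h1 := hnest (j+1) (by omega) (by omega)
      have h2 := ih (by omega)
      have := h1.1
      omega
  rcases Nat.eq_zero_or_pos m with rfl | hpos
  · omega
  · rcases Nat.eq_or_lt_of_le hpos with h | h
    · omega
    · have := key (m - 1) (by omega)
      rw [(by omega : m - 1 + 1 = m), hc1] at this
      omega

lemma one_mem_chainSet {P : ℕ → ℕ → Prop} {X : Set ℕ} (hX : IsBlock P X) :
    1 ∈ chainSet P X := by
  refine ⟨fun _ => X, rfl, fun i h1 h2 => ?_, fun i h1 h2 => by omega⟩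
  exact hX

lemma depth_lt_of_nested {P : ℕ → ℕ → Prop} {X Y : Set ℕ}
    (hX : IsBlock P X) (hY : IsBlock P Y) (hN : Nested Y X) :
    depth P X < depth P Y := by
  have hbddX : BddAbove (chainSet P X) := ⟨sInf X + 1, fun m hm => chainSet_bdd P X hm⟩
  have hbddY : BddAbove (chainSet P Y) := ⟨sInf Y + 1, fun m hm => chainSet_bdd P Y hm⟩
  have hneX : (chainSet P X).Nonempty := ⟨1, one_mem_chainSet hX⟩
  have hdX : depth P X ∈ chainSet P X := Nat.sSup_mem hneX hbddX
  obtain ⟨c, hc1, hblk, hnest⟩ := hdX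
  have h1le : 1 ≤ depth P X := le_csSup hbddX (one_mem_chainSet hX)
  -- extend the chain by putting Y in front
  set m := depth P X with hm
  have hmem : m + 1 ∈ chainSet P Y := by
    refine ⟨fun j => if j ≤ 1 then Y else c (j - 1), by simp, ?_, ?_⟩
    · intro i hi1 hi2
      by_cases h : i ≤ 1
      · simp only [if_pos h]; exact hY
      · simp only [if_neg h]
        exact hblk (i-1) (by omega) (by omega)
    · intro i hi1 hi2
      by_cases h : i ≤ 1
      · have hi : i = 1 := by omega
        subst hi
        simp only [if_pos le_rfl, if_neg (by omega : ¬ (1+1 ≤ 1))]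
        simpa [hc1] using hN
      · simp only [if_neg h, if_neg (by omega : ¬ (i+1 ≤ 1))]
        have := hnest (i-1) (by omega) (by omega)
        simpa [(by omega : i - 1 + 1 = i), (by omega : i + 1 - 1 = i)] using this
  have : m + 1 ≤ depth P Y := le_csSup hbddY hmem
  omega

/-! ### positions and `pCirc` -/

lemma Kmap_mem {n : ℕ} {p : ℕ → ℕ → Prop} {a b : ℕ} (h : Kmap n p a b) :
    1 ≤ a ∧ a ≤ n ∧ 1 ≤ b ∧ b ≤ n := by
  obtain ⟨h1, h2, -, -, -⟩ := h
  simp only [Idx, mem_Icc, evenPos] at h1 h2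
  omega

lemma pCirc_cases {n : ℕ} {p : ℕ → ℕ → Prop} (hp : IsPartitionOn (Idx n) p) {w z : ℕ}
    (h : pCirc n p w z) :
    (∃ a b, p a b ∧ w = 2*a - 1 ∧ z = 2*b - 1 ∧ 1 ≤ a ∧ a ≤ n ∧ 1 ≤ b ∧ b ≤ n) ∨
    (∃ a b, Kmap n p a b ∧ w = 2*a ∧ z = 2*b ∧ 1 ≤ a ∧ a ≤ n ∧ 1 ≤ b ∧ b ≤ n) := by
  rcases h with ⟨a, b, ha, hb, hab⟩ | ⟨a, b, ha, hb, hab⟩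
  · left
    have h1 := rel_mem_left hp hab
    have h2 := rel_mem_right hp hab
    simp only [Idx, mem_Icc] at h1 h2
    exact ⟨a, b, hab, by simp [oddPos] at ha hb ⊢; omega, by simp [oddPos] at ha hb ⊢; omega,
      h1.1, h1.2, h2.1, h2.2⟩
  · right
    have := Kmap_mem hab
    exact ⟨a, b, hab, by simp [evenPos] at ha hb ⊢; omega, by simp [evenPos] at ha hb ⊢; omega,
      by omega, by omega, by omega, by omega⟩

lemma pCirc_self_odd {n : ℕ} {p : ℕ → ℕ → Prop} {a : ℕ} (h : p a a) :
    pCirc n p (oddPos a) (oddPos a) := Or.inl ⟨a, a, rfl, rfl, h⟩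

lemma pCirc_self_even {n : ℕ} {p : ℕ → ℕ → Prop} {a : ℕ} (h : Kmap n p a a) :
    pCirc n p (evenPos a) (evenPos a) := Or.inr ⟨a, a, rfl, rfl, h⟩

lemma pCirc_odd_odd {n : ℕ} {p : ℕ → ℕ → Prop} {a b : ℕ} (h : p a b) :
    pCirc n p (oddPos a) (oddPos b) := Or.inl ⟨a, b, rfl, rfl, h⟩

lemma pCirc_even_even {n : ℕ} {p : ℕ → ℕ → Prop} {a b : ℕ} (h : Kmap n p a b) :
    pCirc n p (evenPos a) (evenPos b) := Or.inr ⟨a, b, rfl, rfl, h⟩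

lemma mergeRel_both {P : ℕ → ℕ → Prop} {X Y : Set ℕ} {w z : ℕ}
    (hw : P w w) (hz : P z z) (hwm : w ∈ X ∪ Y) (hzm : z ∈ X ∪ Y) :
    mergeRel P X Y w z := Or.inr ⟨hw, hz, hwm, hzm⟩

lemma mergeRel_of {P : ℕ → ℕ → Prop} {X Y : Set ℕ} {w z : ℕ} (h : P w z) :
    mergeRel P X Y w z := Or.inl h

/-- membership in an odd image -/
lemma mem_oddImg {B : Set ℕ} (hB : B ⊆ Idx (1000000000)) {w : ℕ} :
    w ∈ oddPos '' B ↔ ∃ u ∈ B, w = 2*u - 1 := by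
  constructor
  · rintro ⟨u, hu, rfl⟩; exact ⟨u, hu, rfl⟩
  · rintro ⟨u, hu, rfl⟩; exact ⟨u, hu, rfl⟩

end Aux3

section Aux4
open Set

variable {n : ℕ} {p : ℕ → ℕ → Prop}

lemma Kmap_iff (hp : IsPartitionOn (Idx n) p) (x y : ℕ) :
    Kmap n p x y ↔ KI n p x y :=
  Kmap_iff_KI (fun a b hab => ⟨rel_mem_left hp hab, rel_mem_right hp hab⟩) hp.1 x y

/-- members of a block of `Kmap n p` are `KI`-related to the base point -/
lemma Kblock_iff (hp : IsPartitionOn (Idx n) p) {C : Set ℕ} (hC : IsBlock (Kmap n p) C) :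
    ∃ c0, KI n p c0 c0 ∧ ∀ u, u ∈ C ↔ KI n p c0 u := by
  obtain ⟨c0, h0, rfl⟩ := hC
  rw [Kmap_iff hp] at h0
  exact ⟨c0, h0, fun u => by rw [mem_setOf_eq, Kmap_iff hp]⟩

lemma Kclass_rel (hp : IsPartitionOn (Idx n) p) {C : Set ℕ} (hC : IsBlock (Kmap n p) C)
    {u v : ℕ} (hu : u ∈ C) (hv : v ∈ C) : KI n p u v := by
  obtain ⟨c0, -, hiff⟩ := Kblock_iff hp hC
  exact KI_trans hp.1 (KI_symm ((hiff u).1 hu)) ((hiff v).1 hv)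

lemma Kclass_closed (hp : IsPartitionOn (Idx n) p) {C : Set ℕ} (hC : IsBlock (Kmap n p) C)
    {u v : ℕ} (hu : u ∈ C) (huv : KI n p u v) : v ∈ C := by
  obtain ⟨c0, -, hiff⟩ := Kblock_iff hp hC
  exact (hiff v).2 (KI_trans hp.1 ((hiff u).1 hu) huv)

lemma Kclass_subset (hp : IsPartitionOn (Idx n) p) {C : Set ℕ} (hC : IsBlock (Kmap n p) C) :
    C ⊆ Idx n := by
  intro u hu
  exact (Kclass_rel hp hC hu hu).1

lemma Kclass_finite (hp : IsPartitionOn (Idx n) p) {C : Set ℕ} (hC : IsBlock (Kmap n p) C) :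
    C.Finite := (Set.finite_Icc 1 n).subset (Kclass_subset hp hC)

lemma Kclass_nonempty (hp : IsPartitionOn (Idx n) p) {C : Set ℕ} (hC : IsBlock (Kmap n p) C) :
    C.Nonempty := by
  obtain ⟨c0, h0, rfl⟩ := hC; exact ⟨c0, h0⟩

/-- gap-locating lemma -/
lemma locate_gap {S : Set ℕ} (hS : S.Finite) (hne : S.Nonempty) {x : ℕ}
    (hlo : nthSmall S 1 ≤ x) (hhi : x < nthSmall S S.ncard) :
    ∃ j, 1 ≤ j ∧ j + 1 ≤ S.ncard ∧ nthSmall S j ≤ x ∧ x < nthSmall S (j+1) := by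
  have hr1 : 1 ≤ S.ncard := (Set.ncard_pos hS).2 hne
  set k := (S ∩ Iic x).ncard with hk
  have hb1 := (nth_spec hS le_rfl hr1).1
  have hk1 : 1 ≤ k := card_Iic_pos hS (x := nthSmall S 1) hb1 |>.trans
    (card_Iic_le hS hlo)
  have hkr : k ≤ S.ncard := card_Iic_le_card hS x
  have hkr' : k < S.ncard := by
    rcases Nat.eq_or_lt_of_le hkr with h | h
    · exfalso
      have hsub : S ∩ Iic x ⊆ S := inter_subset_left
      have heq : S ∩ Iic x = S := Set.eq_of_subset_of_ncard_le hsub (by omega) hS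
      have : nthSmall S S.ncard ∈ S ∩ Iic x := by
        rw [heq]; exact (nth_spec hS hr1 le_rfl).1
      have := this.2
      simp only [mem_Iic] at this
      omega
    · exact h
  refine ⟨k, hk1, by omega, ?_, ?_⟩
  · -- nth k ≤ x
    have hsub : S ∩ Iic x ⊆ S ∩ Iic (nthSmall S k) := by
      intro y ⟨hyS, hyle⟩
      refine ⟨hyS, mem_Iic.2 ?_⟩
      obtain ⟨heq, h1, h2⟩ := mem_eq_nth hS hyS
      have : (S ∩ Iic y).ncard ≤ k := card_Iic_le hS (mem_Iic.1 hyle)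
      calc y = nthSmall S ((S ∩ Iic y).ncard) := heq
        _ ≤ nthSmall S k := nth_le_nth hS h1 this (by omega)
    have hck := (nth_spec hS hk1 (by omega)).2
    have heq : S ∩ Iic x = S ∩ Iic (nthSmall S k) :=
      Set.eq_of_subset_of_ncard_le hsub (by omega) (hS.subset inter_subset_left)
    have : nthSmall S k ∈ S ∩ Iic x := by
      rw [heq]; exact ⟨(nth_spec hS hk1 (by omega)).1, mem_Iic.2 le_rfl⟩
    exact mem_Iic.1 this.2
  · -- x < nth (k+1)
    by_contra h
    have hck1 := (nth_spec hS (by omega : (1:ℕ) ≤ k+1) (by omega)).2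
    have := card_Iic_le hS (S := S) (by omega : nthSmall S (k+1) ≤ x)
    omega

/-! ### region lemmas for a block `B` of `p` w.r.t. `KI n p` -/

/-- consecutive elements of a block are `p`-related -/
lemma nth_rel (hp : IsPartitionOn (Idx n) p) {B : Set ℕ} (hB : IsBlock p B) (hBf : B.Finite) {j k : ℕ} (h1 : 1 ≤ j) (h2 : j ≤ B.ncard)
    (h3 : 1 ≤ k) (h4 : k ≤ B.ncard) : p (nthSmall B j) (nthSmall B k) :=
  block_rel hp hB (nth_spec hBf h1 h2).1 (nth_spec hBf h3 h4).1

/-- (R1): a `KI`-class meeting a gap `[b_j, b_{j+1})` of `B` stays in it. -/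
lemma region_gap (hp : IsPartitionOn (Idx n) p) {B : Set ℕ} (hB : IsBlock p B) (hBf : B.Finite) {j e f : ℕ} (h1 : 1 ≤ j) (h2 : j + 1 ≤ B.ncard)
    (hef : KI n p e f) (he1 : nthSmall B j ≤ e) (he2 : e < nthSmall B (j+1)) :
    nthSmall B j ≤ f ∧ f < nthSmall B (j+1) := by
  set bj := nthSmall B j
  set bj1 := nthSmall B (j+1)
  have hrel : p bj bj1 := nth_rel hp hB hBf h1 (by omega) (by omega) h2
  have hrel' : p bj1 bj := hp.1 _ _ hrel
  have hlt : bj < bj1 := nth_lt_nth hBf h1 (by omega) h2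
  by_contra hcon
  rcases Nat.lt_or_ge f bj with hf | hf
  · -- f < bj : interval (f, e] contains bj but not bj1
    have := hef.2.2 bj bj1 hrel ⟨by omega, by omega⟩
    unfold In2 at this; omega
  · have hf2 : bj1 ≤ f := by omega
    -- interval (e, f] contains bj1 but not bj
    have := hef.2.2 bj1 bj hrel' ⟨by omega, by omega⟩
    unfold In2 at this; omega

/-- (R2): anything `KI`-related to the largest element of `B` lies outside `[b_1, b_r)`. -/
lemma region_outer (hp : IsPartitionOn (Idx n) p) {B : Set ℕ} (hB : IsBlock p B) (hBf : B.Finite)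
    (hBne : B.Nonempty) {x : ℕ}
    (hx : KI n p x (nthSmall B B.ncard)) :
    x < nthSmall B 1 ∨ nthSmall B B.ncard ≤ x := by
  by_contra hcon
  push_neg at hcon
  obtain ⟨hlo, hhi⟩ := hcon
  obtain ⟨j, hj1, hj2, hjle, hjlt⟩ := locate_gap hBf hBne hlo hhi
  have := region_gap hp hB hBf hj1 hj2 hx hjle hjlt
  have hmono : nthSmall B (j+1) ≤ nthSmall B B.ncard := nth_le_nth hBf (by omega) hj2 le_rfl
  omega

end Aux4

section Aux5
open Set

variable {n : ℕ} {p : ℕ → ℕ → Prop}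

lemma merge_strip {P : ℕ → ℕ → Prop} {X Y : Set ℕ} {w z : ℕ}
    (h : mergeRel P X Y w z) (hw : w ∉ X ∪ Y) : P w z := by
  rcases h with h | ⟨-, -, hw', -⟩
  · exact h
  · exact absurd hw' hw

lemma merge_strip' {P : ℕ → ℕ → Prop} {X Y : Set ℕ} {w z : ℕ}
    (h : mergeRel P X Y w z) (hz : z ∉ X ∪ Y) : P w z := by
  rcases h with h | ⟨-, -, -, hz'⟩
  · exact h
  · exact absurd hz' hz

lemma oddpos_notMem {B C : Set ℕ} (hBsub : B ⊆ Idx n) {a : ℕ} (ha : 1 ≤ a) (haB : a ∉ B) :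
    (2*a - 1) ∉ oddPos '' B ∪ evenPos '' C := by
  rintro (⟨u, hu, hu2⟩ | ⟨v, -, hv2⟩)
  · obtain ⟨hu1, -⟩ := hBsub hu
    simp only [oddPos] at hu2
    have : u = a := by omega
    subst this; exact haB hu
  · simp only [evenPos] at hv2; omega

lemma evenpos_notMem {B C : Set ℕ} (hBsub : B ⊆ Idx n) {a : ℕ} (ha : 1 ≤ a) (haC : a ∉ C) :
    (2*a) ∉ oddPos '' B ∪ evenPos '' C := by
  rintro (⟨u, hu, hu2⟩ | ⟨v, hv, hv2⟩)
  · obtain ⟨hu1, -⟩ := hBsub hu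
    simp only [oddPos] at hu2; omega
  · simp only [evenPos] at hv2
    have : v = a := by omega
    subst this; exact haC hv

lemma pCirc_oo (hp : IsPartitionOn (Idx n) p) {u v : ℕ} (hu : 1 ≤ u) (hv : 1 ≤ v)
    (h : pCirc n p (2*u - 1) (2*v - 1)) : p u v := by
  rcases pCirc_cases hp h with ⟨a, b, hab, h1, h2, ha1, -, hb1, -⟩ | ⟨a, b, -, h1, -, ha1, -⟩
  · have : a = u := by omega
    have h2' : b = v := by omega
    subst this; subst h2'; exact hab
  · omega

lemma pCirc_ee (hp : IsPartitionOn (Idx n) p) {u v : ℕ} (hu : 1 ≤ u) (hv : 1 ≤ v)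
    (h : pCirc n p (2*u) (2*v)) : Kmap n p u v := by
  rcases pCirc_cases hp h with ⟨a, b, -, h1, -, ha1, -⟩ | ⟨a, b, hab, h1, h2, ha1, -, hb1, -⟩
  · omega
  · have : a = u := by omega
    have h2' : b = v := by omega
    subst this; subst h2'; exact hab

lemma pCirc_mixed (hp : IsPartitionOn (Idx n) p) {w z : ℕ}
    (h : pCirc n p w z) (hpar : (w % 2 = 0 ∧ z % 2 = 1) ∨ (w % 2 = 1 ∧ z % 2 = 0)) :
    False := by
  rcases pCirc_cases hp h with ⟨a, b, -, h1, h2, ha1, -, hb1, -⟩ | ⟨a, b, -, h1, h2, ha1, -, hb1, -⟩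
  · omega
  · omega

lemma self_even (hp : IsPartitionOn (Idx n) p) {e : ℕ} (he : e ∈ Idx n) :
    Kmap n p e e := (Kmap_iff hp e e).2 (KI_refl he)

/-! refutation helpers for the merged partition `(p°)_{X,Y}` with
`X = oddPos '' B`, `Y = evenPos '' C`. -/

section Refute
variable (hp : IsPartitionOn (Idx n) p) {B C : Set ℕ}
include hp

lemma refute_oo_r (hBsub : B ⊆ Idx n) (hB : IsBlock p B) {a b : ℕ}
    (haB : a ∈ B) (hb : 1 ≤ b) (hbB : b ∉ B)
    (h : mergeRel (pCirc n p) (oddPos '' B) (evenPos '' C) (2*a-1) (2*b-1)) : False := by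
  have h' := merge_strip' h (oddpos_notMem hBsub hb hbB)
  exact hbB (block_closed hp hB haB (pCirc_oo hp (hBsub haB).1 hb h'))

lemma refute_oo_l (hBsub : B ⊆ Idx n) (hB : IsBlock p B) {a b : ℕ}
    (ha : 1 ≤ a) (haB : a ∉ B) (hbB : b ∈ B)
    (h : mergeRel (pCirc n p) (oddPos '' B) (evenPos '' C) (2*a-1) (2*b-1)) : False := by
  have h' := merge_strip h (oddpos_notMem hBsub ha haB)
  exact haB (block_closed hp hB hbB (hp.1 _ _ (pCirc_oo hp ha (hBsub hbB).1 h')))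

lemma refute_oe (hBsub : B ⊆ Idx n) {a w : ℕ} (ha : 1 ≤ a) (haB : a ∉ B) (hw : w % 2 = 0)
    (h : mergeRel (pCirc n p) (oddPos '' B) (evenPos '' C) (2*a-1) w) : False := by
  have h' := merge_strip h (oddpos_notMem hBsub ha haB)
  exact pCirc_mixed hp h' (Or.inr ⟨by omega, hw⟩)

lemma refute_eo (hBsub : B ⊆ Idx n) {a w : ℕ} (ha : 1 ≤ a) (haB : a ∉ B) (hw : w % 2 = 0)
    (h : mergeRel (pCirc n p) (oddPos '' B) (evenPos '' C) w (2*a-1)) : False := by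
  have h' := merge_strip' h (oddpos_notMem hBsub ha haB)
  exact pCirc_mixed hp h' (Or.inl ⟨hw, by omega⟩)

lemma refute_eo_l (hBsub : B ⊆ Idx n) {a w : ℕ} (ha : 1 ≤ a) (haC : a ∉ C) (hw : w % 2 = 1)
    (h : mergeRel (pCirc n p) (oddPos '' B) (evenPos '' C) (2*a) w) : False := by
  have h' := merge_strip h (evenpos_notMem hBsub ha haC)
  exact pCirc_mixed hp h' (Or.inl ⟨by omega, hw⟩)

lemma refute_oe_r (hBsub : B ⊆ Idx n) {a w : ℕ} (ha : 1 ≤ a) (haC : a ∉ C) (hw : w % 2 = 1)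
    (h : mergeRel (pCirc n p) (oddPos '' B) (evenPos '' C) w (2*a)) : False := by
  have h' := merge_strip' h (evenpos_notMem hBsub ha haC)
  exact pCirc_mixed hp h' (Or.inr ⟨hw, by omega⟩)

lemma refute_ee_l (hBsub : B ⊆ Idx n) (hC : IsBlock (Kmap n p) C) {a b : ℕ}
    (ha : 1 ≤ a) (haC : a ∉ C) (hbC : b ∈ C)
    (h : mergeRel (pCirc n p) (oddPos '' B) (evenPos '' C) (2*a) (2*b)) : False := by
  have h' := merge_strip h (evenpos_notMem hBsub ha haC)
  have hb1 : 1 ≤ b := (Kclass_subset hp hC hbC).1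
  have := (Kmap_iff hp a b).1 (pCirc_ee hp ha hb1 h')
  exact haC (Kclass_closed hp hC hbC (KI_symm this))

lemma refute_ee_r (hBsub : B ⊆ Idx n) (hC : IsBlock (Kmap n p) C) {a b : ℕ}
    (haC : a ∈ C) (hb : 1 ≤ b) (hbC : b ∉ C)
    (h : mergeRel (pCirc n p) (oddPos '' B) (evenPos '' C) (2*a) (2*b)) : False := by
  have h' := merge_strip' h (evenpos_notMem hBsub hb hbC)
  have ha1 : 1 ≤ a := (Kclass_subset hp hC haC).1
  have := (Kmap_iff hp a b).1 (pCirc_ee hp ha1 hb h')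
  exact hbC (Kclass_closed hp hC haC this)

end Refute
end Aux5

section Aux6
open Set

variable {n : ℕ} {p : ℕ → ℕ → Prop}

/-- The upper enveloping block `C^B` contains the largest element of `B`. -/
lemma br_mem_CB (hp : IsPartitionOn (Idx n) p) (hnc : NonCrossing p)
    {B : Set ℕ} (hB : IsBlock p B) {CB : Set ℕ} (hCB : IsBlock (Kmap n p) CB)
    (hadj : Adjacent (pCirc n p) (oddPos '' B) (evenPos '' CB))
    (hdep : depth (pCirc n p) (evenPos '' CB) ≤ depth (pCirc n p) (oddPos '' B)) :
    nthSmall B B.ncard ∈ CB := by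
  have hBf := block_finite hp hB
  have hBne := block_nonempty hp hB
  have hBsub := block_subset hp hB
  have hCsub := Kclass_subset hp hCB
  have hCne := Kclass_nonempty hp hCB
  have hr1 : 1 ≤ B.ncard := (Set.ncard_pos hBf).2 hBne
  set b1 := nthSmall B 1 with hb1
  set br := nthSmall B B.ncard with hbr
  have hb1m : b1 ∈ B := (nth_spec hBf le_rfl hr1).1
  have hbrm : br ∈ B := (nth_spec hBf hr1 le_rfl).1
  have hb1le : b1 ≤ br := nth_le_nth hBf le_rfl hr1 le_rfl
  obtain ⟨hb1n1, hb1n2⟩ := hBsub hb1m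
  obtain ⟨hbrn1, hbrn2⟩ := hBsub hbrm
  have hNC := hadj.2.2.2
  by_contra hbrCB
  by_cases hc1 : ∃ e ∈ CB, e < b1
  · -- Case 1 : some element of CB lies to the left of B
    obtain ⟨e, heC, helt⟩ := hc1
    obtain ⟨hen1, hen2⟩ := hCsub heC
    have hKee : Kmap n p e e := self_even hp (hCsub heC)
    have hmm : ¬ ∀ a b, p a b → In2 e br a → In2 e br b := fun h =>
      hbrCB (Kclass_closed hp hCB heC ⟨⟨hen1, hen2⟩, ⟨hbrn1, hbrn2⟩, h⟩)
    push_neg at hmm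
    obtain ⟨a, d, had, hina, hind⟩ := hmm
    unfold In2 at hina hind
    rw [(by omega : min e br = e), (by omega : max e br = br)] at hina hind
    obtain ⟨han1, han2⟩ := rel_mem_left hp had
    obtain ⟨hdn1, hdn2⟩ := rel_mem_right hp had
    have haB : a ∉ B := by
      intro haB
      have hd : d ∈ B := block_closed hp hB haB had
      have h1 := nth_min hBf hd
      have h2 := nth_max hBf hd
      omega
    have halt : a < br := by
      rcases Nat.lt_or_ge a br with h | h
      · exact h
      · have : a = br := by omega
        subst this; exact absurd hbrm haB
    have hm13 : mergeRel (pCirc n p) (oddPos '' B) (evenPos '' CB) (2*e) (2*br-1) :=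
      mergeRel_both (pCirc_self_even hKee) (pCirc_self_odd (block_rel hp hB hbrm hbrm))
        (Or.inr ⟨e, heC, rfl⟩) (Or.inl ⟨br, hbrm, rfl⟩)
    rcases Nat.lt_or_ge br d with hd | hd
    · -- d > br
      exact refute_eo hp hBsub han1 haB (by omega)
        (hNC (2*e) (2*a-1) (2*br-1) (2*d-1) (by omega) (by omega) (by omega)
          hm13 (mergeRel_of (pCirc_odd_odd had)))
    · -- d ≤ e
      have hde : d ≤ e := by omega
      have hdB : d ∉ B := by
        intro hdB
        have h1 := nth_min hBf hdB
        omega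
      exact refute_oe hp hBsub hdn1 hdB (by omega)
        (hNC (2*d-1) (2*e) (2*a-1) (2*br-1) (by omega) (by omega) (by omega)
          (mergeRel_of (pCirc_odd_odd (hp.1 _ _ had))) hm13)
  · push_neg at hc1
    by_cases hc2 : ∃ e ∈ CB, br < e
    · -- Case 2 : CB has an element to the right of br (and none left of b1)
      obtain ⟨c, hcC, hclt⟩ := hc2
      obtain ⟨hcn1, hcn2⟩ := hCsub hcC
      have hKcc : Kmap n p c c := self_even hp (hCsub hcC)
      have hmm : ¬ ∀ a b, p a b → In2 c br a → In2 c br b := fun h =>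
        hbrCB (Kclass_closed hp hCB hcC ⟨⟨hcn1, hcn2⟩, ⟨hbrn1, hbrn2⟩, h⟩)
      push_neg at hmm
      obtain ⟨a, d, had, hina, hind⟩ := hmm
      unfold In2 at hina hind
      rw [(by omega : min c br = br), (by omega : max c br = c)] at hina hind
      obtain ⟨han1, han2⟩ := rel_mem_left hp had
      obtain ⟨hdn1, hdn2⟩ := rel_mem_right hp had
      have haB : a ∉ B := by
        intro haB
        have h2 := nth_max hBf haB
        omega
      have hdB : d ∉ B := fun hdB => haB (block_closed hp hB hdB (hp.1 _ _ had))
      have hm24 : mergeRel (pCirc n p) (oddPos '' B) (evenPos '' CB) (2*b1-1) (2*c) :=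
        mergeRel_both (pCirc_self_odd (block_rel hp hB hb1m hb1m)) (pCirc_self_even hKcc)
          (Or.inl ⟨b1, hb1m, rfl⟩) (Or.inr ⟨c, hcC, rfl⟩)
      rcases Nat.lt_or_ge c d with hd | hd
      · -- d > c
        exact refute_oo_r hp hBsub hB hb1m han1 haB
          (hNC (2*b1-1) (2*a-1) (2*c) (2*d-1) (by omega) (by omega) (by omega)
            hm24 (mergeRel_of (pCirc_odd_odd had)))
      · -- d ≤ br (d ∉ (br, c])
        have hdle : d ≤ br := by omega
        rcases Nat.lt_or_ge d b1 with hdb1 | hdb1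
        · -- d < b1
          exact refute_oo_l hp hBsub hB hdn1 hdB hb1m
            (hNC (2*d-1) (2*b1-1) (2*a-1) (2*c) (by omega) (by omega) (by omega)
              (mergeRel_of (pCirc_odd_odd (hp.1 _ _ had))) hm24)
        · -- b1 ≤ d ≤ br, d ∉ B : gap, pure p-noncrossing contradiction
          have hdlt : d < br := by
            rcases Nat.eq_or_lt_of_le hdle with h | h
            · exact absurd (h ▸ hbrm) hdB
            · exact h
          obtain ⟨j, hj1, hj2, hjle, hjlt⟩ := locate_gap hBf hBne hdb1 hdlt
          have hjm := (nth_spec hBf hj1 (by omega)).1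
          have hjm1 := (nth_spec hBf (by omega : (1:ℕ) ≤ j+1) hj2).1
          have hjd : nthSmall B j < d := by
            rcases Nat.eq_or_lt_of_le hjle with h | h
            · exact absurd (h ▸ hjm) hdB
            · exact h
          have hja : nthSmall B (j+1) < a := by
            have := nth_max hBf hjm1; omega
          have := hnc (nthSmall B j) d (nthSmall B (j+1)) a hjd hjlt hja
            (block_rel hp hB hjm hjm1) (hp.1 _ _ had)
          exact hdB (block_closed hp hB hjm this)
    · -- Case 3 : CB ⊆ [b1, br) : nested in a gap, depth contradiction
      push_neg at hc2
      obtain ⟨c0, hc0⟩ := hCne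
      have hc0lo : b1 ≤ c0 := hc1 c0 hc0
      have hc0hi : c0 < br := by
        have := hc2 c0 hc0
        rcases Nat.eq_or_lt_of_le this with h | h
        · exact absurd (h ▸ hc0) hbrCB
        · exact h
      obtain ⟨j, hj1, hj2, hjle, hjlt⟩ := locate_gap hBf hBne hc0lo hc0hi
      have hgap : ∀ e ∈ CB, nthSmall B j ≤ e ∧ e < nthSmall B (j+1) :=
        fun e he => region_gap hp hB hBf hj1 hj2 (Kclass_rel hp hCB hc0 he) hjle hjlt
      have hjm := (nth_spec hBf hj1 (by omega)).1
      have hjm1 := (nth_spec hBf (by omega : (1:ℕ) ≤ j+1) hj2).1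
      have hj1b : b1 ≤ nthSmall B j := nth_min hBf hjm
      have hjrb : nthSmall B (j+1) ≤ br := nth_max hBf hjm1
      -- Nested (evenPos '' CB) (oddPos '' B)
      have hNest : Nested (evenPos '' CB) (oddPos '' B) := by
        constructor
        · have h1 : sInf (oddPos '' B) ≤ 2*b1 - 1 := Nat.sInf_le ⟨b1, hb1m, rfl⟩
          have h2 : sInf (evenPos '' CB) ∈ evenPos '' CB :=
            Nat.sInf_mem ⟨evenPos c0, c0, hc0, rfl⟩
          obtain ⟨e, he, heq⟩ := h2
          have heq' : 2*e = sInf (evenPos '' CB) := heq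
          have := (hgap e he).1
          omega
        · have hbddO : BddAbove (oddPos '' B) := by
            refine ⟨2*n, ?_⟩
            rintro w ⟨u, hu, rfl⟩
            have := hBsub hu
            simp only [Idx, mem_Icc] at this
            simp only [oddPos]; omega
          have hbddE : BddAbove (evenPos '' CB) := by
            refine ⟨2*n, ?_⟩
            rintro w ⟨u, hu, rfl⟩
            have := hCsub hu
            simp only [Idx, mem_Icc] at this
            simp only [evenPos]; omega
          have h1 : 2*br - 1 ≤ sSup (oddPos '' B) := le_csSup hbddO ⟨br, hbrm, rfl⟩
          have h2 : sSup (evenPos '' CB) ∈ evenPos '' CB :=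
            Nat.sSup_mem ⟨evenPos c0, c0, hc0, rfl⟩ hbddE
          obtain ⟨e, he, heq⟩ := h2
          have heq' : 2*e = sSup (evenPos '' CB) := heq
          have := (hgap e he).2
          omega
      have := depth_lt_of_nested hadj.1 hadj.2.1 hNest
      omega

/-- The lower enveloping block `C^B_i` contains the `i`-th smallest element of `B`. -/
lemma bi_mem_CBi (hp : IsPartitionOn (Idx n) p) (hnc : NonCrossing p)
    {B : Set ℕ} (hB : IsBlock p B) {i : ℕ} (hi1 : 1 ≤ i) (hi2 : i + 1 ≤ B.ncard)
    {CBi : Set ℕ} (hCBi : IsBlock (Kmap n p) CBi)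
    (hadj : Adjacent (pCirc n p) (oddPos '' B) (evenPos '' CBi))
    (hpos : ∀ x ∈ evenPos '' CBi,
      oddPos (nthSmall B i) < x ∧ x < oddPos (nthSmall B (i + 1))) :
    nthSmall B i ∈ CBi := by
  have hBf := block_finite hp hB
  have hBsub := block_subset hp hB
  have hCsub := Kclass_subset hp hCBi
  have hCne := Kclass_nonempty hp hCBi
  set bi := nthSmall B i with hbi
  set bi1 := nthSmall B (i+1) with hbi1
  have hbim : bi ∈ B := (nth_spec hBf hi1 (by omega)).1
  have hbi1m : bi1 ∈ B := (nth_spec hBf (by omega : (1:ℕ) ≤ i+1) hi2).1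
  have hbilt : bi < bi1 := nth_lt_nth hBf hi1 (by omega) hi2
  obtain ⟨hbin1, hbin2⟩ := hBsub hbim
  obtain ⟨hbi1n1, hbi1n2⟩ := hBsub hbi1m
  have hNC := hadj.2.2.2
  have hposc : ∀ c ∈ CBi, bi ≤ c ∧ c < bi1 := by
    intro c hc
    have := hpos (evenPos c) ⟨c, hc, rfl⟩
    simp only [oddPos, evenPos] at this
    omega
  by_contra hbiC
  obtain ⟨c0, hc0⟩ := hCne
  obtain ⟨hc0lo, hc0hi⟩ := hposc c0 hc0
  obtain ⟨hc0n1, hc0n2⟩ := hCsub hc0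
  have hc0gt : bi < c0 := by
    rcases Nat.eq_or_lt_of_le hc0lo with h | h
    · exfalso; exact hbiC (by rw [h]; exact hc0)
    · exact h
  have hmm : ¬ ∀ a b, p a b → In2 c0 bi a → In2 c0 bi b := fun h =>
    hbiC (Kclass_closed hp hCBi hc0 ⟨⟨hc0n1, hc0n2⟩, ⟨hbin1, hbin2⟩, h⟩)
  push_neg at hmm
  obtain ⟨a, d, had, hina, hind⟩ := hmm
  unfold In2 at hina hind
  rw [(by omega : min c0 bi = bi), (by omega : max c0 bi = c0)] at hina hind
  obtain ⟨han1, han2⟩ := rel_mem_left hp had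
  obtain ⟨hdn1, hdn2⟩ := rel_mem_right hp had
  have haB : a ∉ B := by
    intro haB
    have := nth_gap hBf hi1 hi2 haB (by omega)
    omega
  have hdB : d ∉ B := fun hdB => haB (block_closed hp hB hdB (hp.1 _ _ had))
  have hdgap : c0 < d ∧ d < bi1 := by
    constructor
    · rcases Nat.lt_or_ge c0 d with h | h
      · exact h
      · -- d ≤ bi (since d ∉ (bi, c0])
        exfalso
        have hdbi : d < bi := by
          rcases Nat.lt_or_ge d bi with h' | h'
          · exact h'
          · have : d = bi := by omega
            exact absurd (this ▸ hbim) hdB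
        have := hnc d bi a bi1 hdbi (by omega) (by omega)
          (hp.1 _ _ had) (block_rel hp hB hbim hbi1m)
        exact hdB (block_closed hp hB hbim (hp.1 _ _ this))
    · rcases Nat.lt_or_ge d bi1 with h | h
      · exact h
      · exfalso
        have hdgt : bi1 < d := by
          rcases Nat.eq_or_lt_of_le h with h' | h'
          · exact absurd (h' ▸ hbi1m) hdB
          · exact h'
        have := hnc bi a bi1 d (by omega) (by omega) hdgt
          (block_rel hp hB hbim hbi1m) had
        exact haB (block_closed hp hB hbim this)
  have hm13 : mergeRel (pCirc n p) (oddPos '' B) (evenPos '' CBi) (2*bi-1) (2*c0) :=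
    mergeRel_both (pCirc_self_odd (block_rel hp hB hbim hbim))
      (pCirc_self_even (self_even hp (hCsub hc0)))
      (Or.inl ⟨bi, hbim, rfl⟩) (Or.inr ⟨c0, hc0, rfl⟩)
  exact refute_oo_r hp hBsub hB hbim han1 haB
    (hNC (2*bi-1) (2*a-1) (2*c0) (2*d-1) (by omega) (by omega) (by omega)
      hm13 (mergeRel_of (pCirc_odd_odd had)))

end Aux6

section Aux7
open Set

variable {n : ℕ} {p : ℕ → ℕ → Prop}

lemma split_symm (hp : IsPartitionOn (Idx n) p) (B : Set ℕ) (i : ℕ) :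
    ∀ a b, splitRel p B i a b → splitRel p B i b a := by
  rintro a b ⟨hab, h⟩
  exact ⟨hp.1 _ _ hab, by tauto⟩

lemma split_supp (hp : IsPartitionOn (Idx n) p) (B : Set ℕ) (i : ℕ) :
    ∀ a b, splitRel p B i a b → a ∈ Idx n ∧ b ∈ Idx n := by
  rintro a b ⟨hab, -⟩
  exact ⟨rel_mem_left hp hab, rel_mem_right hp hab⟩

lemma Kmap_split_iff (hp : IsPartitionOn (Idx n) p) (B : Set ℕ) (i : ℕ) (x y : ℕ) :
    Kmap n (splitRel p B i) x y ↔ KI n (splitRel p B i) x y :=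
  Kmap_iff_KI (split_supp hp B i) (split_symm hp B i) x y

/-- Main equivalence, first half. -/
lemma half1 (hp : IsPartitionOn (Idx n) p) (hnc : NonCrossing p)
    {B : Set ℕ} (hB : IsBlock p B) {i : ℕ} (hi1 : 1 ≤ i) (hi2 : i ≤ B.ncard - 1)
    {CB : Set ℕ} (hCB : IsBlock (Kmap n p) CB)
    (hadjB : Adjacent (pCirc n p) (oddPos '' B) (evenPos '' CB))
    (hdepB : depth (pCirc n p) (evenPos '' CB) ≤ depth (pCirc n p) (oddPos '' B))
    {CBi : Set ℕ} (hCBi : IsBlock (Kmap n p) CBi)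
    (hadji : Adjacent (pCirc n p) (oddPos '' B) (evenPos '' CBi))
    (hdepi : depth (pCirc n p) (oddPos '' B) < depth (pCirc n p) (evenPos '' CBi))
    (hpos : ∀ x ∈ evenPos '' CBi,
      oddPos (nthSmall B i) < x ∧ x < oddPos (nthSmall B (i + 1))) :
    Kmap n (splitRel p B i) = mergeRel (Kmap n p) CB CBi := by
  have hBf := block_finite hp hB
  have hBne := block_nonempty hp hB
  have hBsub := block_subset hp hB
  have hr1 : 1 ≤ B.ncard := (Set.ncard_pos hBf).2 hBne
  have hi2' : i + 1 ≤ B.ncard := by omega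
  set b1 := nthSmall B 1 with hb1d
  set bi := nthSmall B i with hbid
  set bi1 := nthSmall B (i+1) with hbi1d
  set br := nthSmall B B.ncard with hbrd
  have hb1m : b1 ∈ B := (nth_spec hBf le_rfl hr1).1
  have hbim : bi ∈ B := (nth_spec hBf hi1 (by omega)).1
  have hbi1m : bi1 ∈ B := (nth_spec hBf (by omega : (1:ℕ) ≤ i+1) hi2').1
  have hbrm : br ∈ B := (nth_spec hBf hr1 le_rfl).1
  have hb1bi : b1 ≤ bi := nth_le_nth hBf le_rfl hi1 (by omega)
  have hbibi1 : bi < bi1 := nth_lt_nth hBf hi1 (by omega) hi2'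
  have hbi1br : bi1 ≤ br := nth_le_nth hBf (by omega) hi2' le_rfl
  obtain ⟨hb1n1, hb1n2⟩ := hBsub hb1m
  obtain ⟨hbin1, hbin2⟩ := hBsub hbim
  obtain ⟨hbi1n1, hbi1n2⟩ := hBsub hbi1m
  obtain ⟨hbrn1, hbrn2⟩ := hBsub hbrm
  have hbrCB : br ∈ CB := br_mem_CB hp hnc hB hCB hadjB hdepB
  have hbiCBi : bi ∈ CBi := bi_mem_CBi hp hnc hB hi1 hi2' hCBi hadji hpos
  have hlow : ∀ x, x ∈ lowerPart B i ↔ x ∈ B ∧ x ≤ bi :=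
    fun x => mem_lowerPart_iff hBf hi1 (by omega)
  have hupp : ∀ x, x ∈ upperPart B i ↔ x ∈ B ∧ bi1 ≤ x :=
    fun x => mem_upperPart_iff hBf hi1 hi2'
  have hgap : ∀ u ∈ B, u ≤ bi ∨ bi1 ≤ u := by
    intro u hu
    rcases Nat.lt_or_ge bi u with h | h
    · exact Or.inr (nth_gap hBf hi1 hi2' hu h)
    · exact Or.inl h
  -- position of elements of CB and CBi
  have hposCB : ∀ w ∈ CB, w < b1 ∨ br ≤ w := by
    intro w hw
    exact region_outer hp hB hBf hBne (Kclass_rel hp hCB hw hbrCB)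
  have hposCBi : ∀ w ∈ CBi, bi ≤ w ∧ w < bi1 := by
    intro w hw
    exact region_gap hp hB hBf hi1 hi2' (KI_symm (Kclass_rel hp hCBi hw hbiCBi)) le_rfl hbibi1
  funext x y
  apply propext
  rw [Kmap_split_iff hp B i]
  constructor
  · -- forward
    rintro ⟨hxI, hyI, hresp⟩
    obtain ⟨hx1, hx2⟩ := hxI
    obtain ⟨hy1, hy2⟩ := hyI
    by_cases hxy : KI n p x y
    · exact Or.inl ((Kmap_iff hp x y).2 hxy)
    · have hnR : ¬ ∀ a b, p a b → In2 x y a → In2 x y b := fun h =>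
        hxy ⟨⟨hx1, hx2⟩, ⟨hy1, hy2⟩, h⟩
      push_neg at hnR
      obtain ⟨a, d, had, hina, hind⟩ := hnR
      have haB : a ∈ B := by
        by_contra haB
        have hdB : d ∉ B := fun hdB => haB (block_closed hp hB hdB (hp.1 _ _ had))
        exact hind (hresp a d ⟨had, Or.inr (Or.inr ⟨haB, hdB⟩)⟩ hina)
      have hdB : d ∈ B := block_closed hp hB haB had
      -- L and U each respect the interval
      have respL : ∀ u v, u ∈ B → v ∈ B → u ≤ bi → v ≤ bi → In2 x y u → In2 x y v := by
        intro u v hu hv hu2 hv2 hin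
        exact hresp u v ⟨block_rel hp hB hu hv,
          Or.inl ⟨(hlow u).2 ⟨hu, hu2⟩, (hlow v).2 ⟨hv, hv2⟩⟩⟩ hin
      have respU : ∀ u v, u ∈ B → v ∈ B → bi1 ≤ u → bi1 ≤ v → In2 x y u → In2 x y v := by
        intro u v hu hv hu2 hv2 hin
        exact hresp u v ⟨block_rel hp hB hu hv,
          Or.inr (Or.inl ⟨(hupp u).2 ⟨hu, hu2⟩, (hupp v).2 ⟨hv, hv2⟩⟩)⟩ hin
      have respN : ∀ u v, u ∉ B → p u v → (In2 x y u ↔ In2 x y v) := by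
        intro u v hu huv
        have hvB : v ∉ B := fun hvB => hu (block_closed hp hB hvB (hp.1 _ _ huv))
        constructor
        · exact fun h => hresp u v ⟨huv, Or.inr (Or.inr ⟨hu, hvB⟩)⟩ h
        · exact fun h => hresp v u ⟨hp.1 _ _ huv, Or.inr (Or.inr ⟨hvB, hu⟩)⟩ h
      have hmixed : (a ≤ bi ∧ bi1 ≤ d) ∨ (bi1 ≤ a ∧ d ≤ bi) := by
        rcases hgap a haB with h1 | h1 <;> rcases hgap d hdB with h2 | h2
        · exact absurd (respL a d haB hdB h1 h2 hina) hind
        · exact Or.inl ⟨h1, h2⟩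
        · exact Or.inr ⟨h1, h2⟩
        · exact absurd (respU a d haB hdB h1 h2 hina) hind
      -- selfness for the conclusion
      have hxx : Kmap n p x x := self_even hp ⟨hx1, hx2⟩
      have hyy : Kmap n p y y := self_even hp ⟨hy1, hy2⟩
      have hminmax : (min x y = x ∧ max x y = y) ∨ (min x y = y ∧ max x y = x) := by omega
      unfold In2 at hina hind
      rcases hmixed with ⟨hal, hdu⟩ | ⟨hau, hdl⟩
      · -- Case A : lower part inside the interval
        have hinb1 : In2 x y b1 := respL a b1 haB hb1m hal (by omega) hina
        have hinbi : In2 x y bi := respL a bi haB hbim hal (by omega) hina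
        have hninbi1 : ¬ In2 x y bi1 := fun h => hind (by
          have := respU bi1 d hbi1m hdB le_rfl hdu h
          unfold In2 at this; exact this)
        unfold In2 at hinb1 hinbi hninbi1
        have hKMbi : KI n p (max x y) bi := by
          refine ⟨by constructor <;> omega, ⟨hbin1, hbin2⟩, ?_⟩
          intro u v huv hinu
          unfold In2 at hinu ⊢
          rw [(by omega : min (max x y) bi = bi), (by omega : max (max x y) bi = max x y)] at hinu ⊢
          have huB : u ∉ B := by
            intro huB
            rcases hgap u huB with h | h <;> omega
          have hvB : v ∉ B := fun hvB => huB (block_closed hp hB hvB (hp.1 _ _ huv))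
          have hinxyv : min x y < v ∧ v ≤ max x y := by
            have := (respN u v huB huv).1 (by unfold In2; omega)
            unfold In2 at this; exact this
          constructor
          · -- bi < v
            by_contra hle
            push_neg at hle
            have hvlt : v < bi := by
              rcases Nat.eq_or_lt_of_le hle with h | h
              · exact absurd (h ▸ hbim) hvB
              · exact h
            have := hnc v bi u bi1 hvlt (by omega) (by omega)
              (hp.1 _ _ huv) (block_rel hp hB hbim hbi1m)
            exact hvB (block_closed hp hB hbim (hp.1 _ _ this))
          · omega
        have hKmbr : KI n p (min x y) br := by
          refine ⟨by constructor <;> omega, ⟨hbrn1, hbrn2⟩, ?_⟩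
          intro u v huv hinu
          unfold In2 at hinu ⊢
          rw [(by omega : min (min x y) br = min x y),
            (by omega : max (min x y) br = br)] at hinu ⊢
          by_cases huB : u ∈ B
          · have hvB : v ∈ B := block_closed hp hB huB huv
            have h1 := nth_min hBf hvB
            have h2 := nth_max hBf hvB
            omega
          · have hvB : v ∉ B := fun hvB => huB (block_closed hp hB hvB (hp.1 _ _ huv))
            rcases le_or_gt u (max x y) with hum | hum
            · have hinxyv : min x y < v ∧ v ≤ max x y := by
                have := (respN u v huB huv).1 (by unfold In2; omega)
                unfold In2 at this; exact this
              omega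
            · have hninv : ¬ (min x y < v ∧ v ≤ max x y) := by
                intro h
                have := (respN u v huB huv).2 (by unfold In2; omega)
                unfold In2 at this; omega
              have hult : u < br := by
                rcases Nat.eq_or_lt_of_le hinu.2 with h | h
                · exact absurd (h ▸ hbrm) huB
                · exact h
              rcases le_or_gt v (min x y) with hv | hv
              · exfalso
                have hvb1 : v < b1 := by omega
                have := hnc v b1 u br hvb1 (by omega) hult
                  (hp.1 _ _ huv) (block_rel hp hB hb1m hbrm)
                exact hvB (block_closed hp hB hb1m (hp.1 _ _ this))
              · have hvM : max x y < v := by omega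
                constructor
                · omega
                · by_contra hvbr
                  push_neg at hvbr
                  have := hnc bi u br v (by omega) hult hvbr
                    (block_rel hp hB hbim hbrm) huv
                  exact huB (block_closed hp hB hbim this)
        -- conclude
        have hmCB : min x y ∈ CB := Kclass_closed hp hCB hbrCB (KI_symm hKmbr)
        have hMCBi : max x y ∈ CBi := Kclass_closed hp hCBi hbiCBi (KI_symm hKMbi)
        refine Or.inr ⟨hxx, hyy, ?_, ?_⟩
        · rcases hminmax with ⟨h1, h2⟩ | ⟨h1, h2⟩
          · exact Or.inl (h1 ▸ hmCB)
          · exact Or.inr (h2 ▸ hMCBi)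
        · rcases hminmax with ⟨h1, h2⟩ | ⟨h1, h2⟩
          · exact Or.inr (h2 ▸ hMCBi)
          · exact Or.inl (h1 ▸ hmCB)
      · -- Case B : upper part inside the interval
        have hinbi1 : In2 x y bi1 := respU a bi1 haB hbi1m hau le_rfl hina
        have hinbr : In2 x y br := respU a br haB hbrm hau hbi1br hina
        have hninbi : ¬ In2 x y bi := fun h => hind (by
          have := respL bi d hbim hdB le_rfl hdl h
          unfold In2 at this; exact this)
        unfold In2 at hinbi1 hinbr hninbi
        have hKmbi : KI n p (min x y) bi := by
          refine ⟨by constructor <;> omega, ⟨hbin1, hbin2⟩, ?_⟩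
          intro u v huv hinu
          unfold In2 at hinu ⊢
          rw [(by omega : min (min x y) bi = bi), (by omega : max (min x y) bi = min x y)] at hinu ⊢
          have huB : u ∉ B := by
            intro huB
            rcases hgap u huB with h | h <;> omega
          have hvB : v ∉ B := fun hvB => huB (block_closed hp hB hvB (hp.1 _ _ huv))
          have hninv : ¬ (min x y < v ∧ v ≤ max x y) := by
            intro h
            have := (respN u v huB huv).2 (by unfold In2; omega)
            unfold In2 at this; omega
          have hvm : v ≤ min x y ∨ max x y < v := by omega
          constructor
          · -- bi < v
            by_contra hle
            push_neg at hle
            have hvlt : v < bi := by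
              rcases Nat.eq_or_lt_of_le hle with h | h
              · exact absurd (h ▸ hbim) hvB
              · exact h
            have := hnc v bi u bi1 hvlt (by omega) (by omega)
              (hp.1 _ _ huv) (block_rel hp hB hbim hbi1m)
            exact hvB (block_closed hp hB hbim (hp.1 _ _ this))
          · -- v ≤ min x y
            rcases hvm with h | h
            · exact h
            · exfalso
              have := hnc bi u bi1 v (by omega) (by omega) (by omega)
                (block_rel hp hB hbim hbi1m) huv
              exact huB (block_closed hp hB hbim this)
        have hKMbr : KI n p (max x y) br := by
          refine ⟨by constructor <;> omega, ⟨hbrn1, hbrn2⟩, ?_⟩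
          intro u v huv hinu
          unfold In2 at hinu ⊢
          rw [(by omega : min (max x y) br = br), (by omega : max (max x y) br = max x y)] at hinu ⊢
          have huB : u ∉ B := by
            intro huB
            have := nth_max hBf huB
            omega
          have hvB : v ∉ B := fun hvB => huB (block_closed hp hB hvB (hp.1 _ _ huv))
          have hinxyv : min x y < v ∧ v ≤ max x y := by
            have := (respN u v huB huv).1 (by unfold In2; omega)
            unfold In2 at this; exact this
          constructor
          · -- br < v
            by_contra hle
            push_neg at hle
            have hvlt : v < br := by
              rcases Nat.eq_or_lt_of_le hle with h | h
              · exact absurd (h ▸ hbrm) hvB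
              · exact h
            rcases Nat.lt_or_ge v bi1 with hv1 | hv1
            · have := hnc bi v bi1 u (by omega) hv1 (by omega)
                (block_rel hp hB hbim hbi1m) (hp.1 _ _ huv)
              exact hvB (block_closed hp hB hbim this)
            · have hvgt : bi1 < v := by
                rcases Nat.eq_or_lt_of_le hv1 with h | h
                · exact absurd (h ▸ hbi1m) hvB
                · exact h
              have := hnc bi1 v br u hvgt hvlt (by omega)
                (block_rel hp hB hbi1m hbrm) (hp.1 _ _ huv)
              exact hvB (block_closed hp hB hbi1m this)
          · omega
        have hmCBi : min x y ∈ CBi := Kclass_closed hp hCBi hbiCBi (KI_symm hKmbi)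
        have hMCB : max x y ∈ CB := Kclass_closed hp hCB hbrCB (KI_symm hKMbr)
        refine Or.inr ⟨hxx, hyy, ?_, ?_⟩
        · rcases hminmax with ⟨h1, h2⟩ | ⟨h1, h2⟩
          · exact Or.inr (h1 ▸ hmCBi)
          · exact Or.inl (h2 ▸ hMCB)
        · rcases hminmax with ⟨h1, h2⟩ | ⟨h1, h2⟩
          · exact Or.inl (h2 ▸ hMCB)
          · exact Or.inr (h1 ▸ hmCBi)
  · -- backward
    intro h
    rcases h with h | ⟨hxx, hyy, hxm, hym⟩
    · have hKI := (Kmap_iff hp x y).1 h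
      exact ⟨hKI.1, hKI.2.1, Resp_mono (fun a b hab => hab.1) hKI.2.2⟩
    · obtain ⟨hx1, hx2, -, -⟩ := Kmap_mem hxx
      obtain ⟨hy1, hy2, -, -⟩ := Kmap_mem hyy
      -- the mixed respect statement
      have hmixed : ∀ u v, u ∈ CB → v ∈ CBi → Resp (splitRel p B i) u v := by
        intro u v huCB hvCBi
        obtain ⟨hvlo, hvhi⟩ := hposCBi v hvCBi
        have hubr : KI n p u br := Kclass_rel hp hCB huCB hbrCB
        have hvbi : KI n p v bi := Kclass_rel hp hCBi hvCBi hbiCBi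
        intro s t hst hins
        obtain ⟨hpst, hcase⟩ := hst
        have hsI := rel_mem_left hp hpst
        have htI := rel_mem_right hp hpst
        obtain ⟨hs1, hs2⟩ := hsI
        obtain ⟨ht1, ht2⟩ := htI
        unfold In2 at hins ⊢
        rcases hposCB u huCB with hul | hur
        · -- u < b1
          rw [(by omega : min u v = u), (by omega : max u v = v)] at hins ⊢
          rcases hcase with ⟨hsl, htl⟩ | ⟨hsu, htu⟩ | ⟨hsB, htB⟩
          · obtain ⟨htB, htle⟩ := (hlow t).1 htl
            have := nth_min hBf htB
            omega
          · obtain ⟨hsB, hsge⟩ := (hupp s).1 hsu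
            omega
          · -- both outside B
            have h1 : In2 u br s := by unfold In2; omega
            have h2 := hubr.2.2 s t hpst h1
            unfold In2 at h2
            rw [(by omega : min u br = u), (by omega : max u br = br)] at h2
            rcases le_or_gt t v with htv | htv
            · -- done, need u < t
              constructor
              · omega
              · exact htv
            · exfalso
              -- t ∈ (v, br]
              have hsbi : s ≤ bi := by
                by_contra hgt
                push_neg at hgt
                have := hvbi.2.2 s t hpst (by
                  unfold In2
                  rw [(by omega : min v bi = bi), (by omega : max v bi = v)]
                  omega)
                unfold In2 at this
                rw [(by omega : min v bi = bi), (by omega : max v bi = v)] at this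
                omega
              have hslt : s < bi := by
                rcases Nat.eq_or_lt_of_le hsbi with h | h
                · exact absurd (h ▸ hbim) hsB
                · exact h
              have htbr : t < br := by
                rcases Nat.eq_or_lt_of_le h2.2 with h | h
                · exact absurd (h ▸ hbrm) htB
                · exact h
              have := hnc s bi t br hslt (by omega) htbr hpst
                (block_rel hp hB hbim hbrm)
              exact hsB (block_closed hp hB hbim (hp.1 _ _ this))
        · -- br ≤ u
          rw [(by omega : min u v = v), (by omega : max u v = u)] at hins ⊢
          rcases hcase with ⟨hsl, htl⟩ | ⟨hsu, htu⟩ | ⟨hsB, htB⟩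
          · obtain ⟨hsB, hsle⟩ := (hlow s).1 hsl
            omega
          · obtain ⟨htB, htge⟩ := (hupp t).1 htu
            have := nth_max hBf htB
            omega
          · -- both outside B
            rcases lt_or_ge br s with hsgt | hsle'
            · -- s ∈ (br, u]
              have h2 := hubr.2.2 s t hpst (by
                unfold In2
                rw [(by omega : min u br = br), (by omega : max u br = u)]
                omega)
              unfold In2 at h2
              rw [(by omega : min u br = br), (by omega : max u br = u)] at h2
              omega
            have hsltbr : s < br := by
              rcases Nat.eq_or_lt_of_le hsle' with h | h
              · exact absurd (h ▸ hbrm) hsB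
              · exact h
            constructor
            · -- v < t
              by_contra hle
              push_neg at hle
              rcases Nat.lt_or_ge bi t with hbit | hbit
              · have := hvbi.2.2 t s (hp.1 _ _ hpst) (by
                  unfold In2
                  rw [(by omega : min v bi = bi), (by omega : max v bi = v)]
                  omega)
                unfold In2 at this
                rw [(by omega : min v bi = bi), (by omega : max v bi = v)] at this
                omega
              · have htlt : t < bi := by
                  rcases Nat.eq_or_lt_of_le hbit with h | h
                  · exact absurd (h ▸ hbim) htB
                  · exact h
                have := hnc t bi s br htlt (by omega) hsltbr
                  (hp.1 _ _ hpst) (block_rel hp hB hbim hbrm)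
                exact htB (block_closed hp hB hbim (hp.1 _ _ this))
            · -- t ≤ u
              by_contra hgt
              push_neg at hgt
              have := hnc bi s br t (by omega) hsltbr (by omega)
                (block_rel hp hB hbim hbrm) hpst
              exact hsB (block_closed hp hB hbim this)
      refine ⟨⟨hx1, hx2⟩, ⟨hy1, hy2⟩, ?_⟩
      rcases hxm with hxCB | hxCBi <;> rcases hym with hyCB | hyCBi
      · exact Resp_mono (fun a b hab => hab.1)
          (Kclass_rel hp hCB hxCB hyCB).2.2
      · exact hmixed x y hxCB hyCBi
      · exact Resp_comm (hmixed y x hyCB hxCBi)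
      · exact Resp_mono (fun a b hab => hab.1)
          (Kclass_rel hp hCBi hxCBi hyCBi).2.2

end Aux7

section Aux8
open Set

variable {n : ℕ} {p : ℕ → ℕ → Prop}

lemma mergeRel_swap {P : ℕ → ℕ → Prop} {X Y : Set ℕ} {w z : ℕ} :
    mergeRel P X Y w z ↔ mergeRel P Y X w z := by
  unfold mergeRel
  rw [Set.union_comm]

lemma NonCrossing_merge_swap {P : ℕ → ℕ → Prop} {X Y : Set ℕ}
    (h : NonCrossing (mergeRel P X Y)) : NonCrossing (mergeRel P Y X) :=
  fun i j k l o1 o2 o3 r1 r2 =>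
    mergeRel_swap.1 (h i j k l o1 o2 o3 (mergeRel_swap.2 r1) (mergeRel_swap.2 r2))

/-- Dual separation: if `a ≁_p b` then some `K(p)`-pair crosses `[a, b)`. -/
lemma dual_sep (hp : IsPartitionOn (Idx n) p) (hnc : NonCrossing p)
    {a b : ℕ} (ha : a ∈ Idx n) (hb : b ∈ Idx n) (hab : a < b) (hnab : ¬ p a b) :
    ∃ e f, KI n p e f ∧ a ≤ e ∧ e < b ∧ (f < a ∨ b ≤ f) := by
  obtain ⟨ha1, ha2⟩ := ha
  obtain ⟨hb1, hb2⟩ := hb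
  have haa : p a a := (hp.2.2 a).2 ⟨ha1, ha2⟩
  set A : Set ℕ := {x | p a x} with hA
  have hAblk : IsBlock p A := ⟨a, haa, rfl⟩
  have hAsub : A ⊆ Idx n := block_subset hp hAblk
  have haA : a ∈ A := haa
  have hbA : b ∉ A := hnab
  have hAbdd : BddAbove A := ⟨n, fun x hx => (hAsub hx).2⟩
  have hmemrel : ∀ u v, u ∈ A → v ∈ A → p u v := fun u v hu hv => block_rel hp hAblk hu hv
  have hclosed : ∀ u v, u ∈ A → p u v → v ∈ A := fun u v hu huv => block_closed hp hAblk hu huv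
  by_cases hcase : (A ∩ Ici b).Nonempty
  · -- some element of the block of `a` is ≥ b
    set t := sInf (A ∩ Ici b) with ht
    obtain ⟨htA, htb⟩ := Nat.sInf_mem hcase
    rw [mem_Ici] at htb
    have htgt : b < t := by
      rcases Nat.eq_or_lt_of_le htb with h | h
      · exact absurd (h ▸ htA) hbA
      · exact h
    have hene : (A ∩ Iio b).Nonempty := ⟨a, haA, mem_Iio.2 hab⟩
    set e := sSup (A ∩ Iio b) with he
    obtain ⟨heA, heb⟩ := Nat.sSup_mem hene (hAbdd.mono inter_subset_left)
    rw [mem_Iio] at heb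
    have hae : a ≤ e := le_csSup (hAbdd.mono inter_subset_left) ⟨haA, mem_Iio.2 hab⟩
    obtain ⟨he1, he2⟩ := hAsub heA
    obtain ⟨ht1, ht2⟩ := hAsub htA
    refine ⟨e, t - 1, ⟨⟨he1, he2⟩, ⟨by omega, by omega⟩, ?_⟩, hae, heb, Or.inr (by omega)⟩
    -- Resp p e (t-1)
    intro u v huv hinu
    unfold In2 at hinu ⊢
    rw [(by omega : min e (t-1) = e), (by omega : max e (t-1) = t-1)] at hinu ⊢
    have huA : u ∉ A := by
      intro huA
      rcases Nat.lt_or_ge u b with h | h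
      · have := le_csSup (hAbdd.mono inter_subset_left) (⟨huA, mem_Iio.2 h⟩ : u ∈ A ∩ Iio b)
        omega
      · have := Nat.sInf_le (show u ∈ A ∩ Ici b from ⟨huA, mem_Ici.2 h⟩)
        omega
    have hvA : v ∉ A := fun hvA => huA (hclosed v u hvA (hp.1 _ _ huv))
    constructor
    · by_contra hle
      push_neg at hle
      have hvlt : v < e := by
        rcases Nat.eq_or_lt_of_le hle with h | h
        · exact absurd (h ▸ heA) hvA
        · exact h
      have := hnc v e u t hvlt (by omega) (by omega) (hp.1 _ _ huv) (hmemrel e t heA htA)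
      exact hvA (hclosed e v heA (hp.1 _ _ this))
    · by_contra hgt
      push_neg at hgt
      have hvgt : t < v := by
        rcases Nat.eq_or_lt_of_le (by omega : t ≤ v) with h | h
        · exact absurd (h ▸ htA) hvA
        · exact h
      have := hnc e u t v (by omega) (by omega) hvgt (hmemrel e t heA htA) huv
      exact huA (hclosed e u heA this)
  · -- the whole block of `a` lies below b
    have hallb : ∀ x ∈ A, x < b := by
      intro x hx
      by_contra h
      exact hcase ⟨x, hx, mem_Ici.2 (by omega)⟩
    set e := sSup A with he
    have heA : e ∈ A := Nat.sSup_mem ⟨a, haA⟩ hAbdd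
    have hae : a ≤ e := le_csSup hAbdd haA
    have heb : e < b := hallb e heA
    obtain ⟨he1, he2⟩ := hAsub heA
    set mA := sInf A with hmA
    have hmAA : mA ∈ A := Nat.sInf_mem ⟨a, haA⟩
    have hmAle : mA ≤ a := Nat.sInf_le haA
    obtain ⟨hm1, hm2⟩ := hAsub hmAA
    by_cases hm : 2 ≤ mA
    · -- pair (mA - 1, e)
      refine ⟨e, mA - 1, KI_symm ⟨⟨by omega, by omega⟩, ⟨he1, he2⟩, ?_⟩, hae, heb,
        Or.inl (by omega)⟩
      -- Resp p (mA - 1) e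
      intro u v huv hinu
      unfold In2 at hinu ⊢
      rw [(by omega : min (mA-1) e = mA - 1), (by omega : max (mA-1) e = e)] at hinu ⊢
      by_cases huA : u ∈ A
      · have hvA : v ∈ A := hclosed u v huA huv
        have h1 := Nat.sInf_le hvA
        have h2 := le_csSup hAbdd hvA
        omega
      · have hvA : v ∉ A := fun hvA => huA (hclosed v u hvA (hp.1 _ _ huv))
        have humA : mA < u := by
          rcases Nat.eq_or_lt_of_le (by omega : mA ≤ u) with h | h
          · exact absurd (h ▸ hmAA) huA
          · exact h
        have hue : u < e := by
          rcases Nat.eq_or_lt_of_le hinu.2 with h | h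
          · exact absurd (h ▸ heA) huA
          · exact h
        constructor
        · by_contra hle
          push_neg at hle
          have := hnc v mA u e (by omega) humA hue (hp.1 _ _ huv) (hmemrel mA e hmAA heA)
          exact hvA (hclosed mA v hmAA (hp.1 _ _ this))
        · by_contra hgt
          push_neg at hgt
          have := hnc mA u e v humA hue (by omega) (hmemrel mA e hmAA heA) huv
          exact huA (hclosed mA u hmAA this)
    · -- mA = 1 : pair (e, n)
      have hmA1 : mA = 1 := by omega
      refine ⟨e, n, ⟨⟨he1, he2⟩, ⟨by omega, le_rfl⟩, ?_⟩, hae, heb, Or.inr (by omega)⟩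
      -- Resp p e n
      intro u v huv hinu
      unfold In2 at hinu ⊢
      rw [(by omega : min e n = e), (by omega : max e n = n)] at hinu ⊢
      have huA : u ∉ A := by
        intro huA
        have := le_csSup hAbdd huA
        omega
      have hvA : v ∉ A := fun hvA => huA (hclosed v u hvA (hp.1 _ _ huv))
      obtain ⟨hv1, hv2⟩ := rel_mem_right hp huv
      refine ⟨?_, hv2⟩
      by_contra hle
      push_neg at hle
      have h1A : (1:ℕ) ∈ A := hmA1 ▸ hmAA
      have hv1lt : 1 < v := by
        rcases Nat.eq_or_lt_of_le hv1 with h | h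
        · exact absurd (h.symm ▸ h1A) hvA
        · exact h
      have hve : v < e := by
        rcases Nat.eq_or_lt_of_le hle with h | h
        · exact absurd (h ▸ heA) hvA
        · exact h
      have := hnc 1 v e u hv1lt hve (by omega) (hmemrel 1 e h1A heA) (hp.1 _ _ huv)
      exact hvA (hclosed 1 v h1A this)

end Aux8

section Aux9
open Set

variable {n : ℕ} {p : ℕ → ℕ → Prop}

lemma locate_gap' {S : Set ℕ} (hS : S.Finite) (hne : S.Nonempty) {x : ℕ} (hx1 : 1 ≤ x)
    (hlo : nthSmall S 1 < x) (hhi : x ≤ nthSmall S S.ncard) :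
    ∃ j, 1 ≤ j ∧ j + 1 ≤ S.ncard ∧ nthSmall S j < x ∧ x ≤ nthSmall S (j+1) := by
  obtain ⟨j, h1, h2, h3, h4⟩ := locate_gap hS hne (x := x - 1) (by omega) (by omega)
  exact ⟨j, h1, h2, by omega, by omega⟩

/-- `B^C` contains the smallest element of `C`. -/
lemma c1_mem_BC (hp : IsPartitionOn (Idx n) p) (hnc : NonCrossing p)
    {C : Set ℕ} (hC : IsBlock (Kmap n p) C) {BC : Set ℕ} (hBC : IsBlock p BC)
    (hadj : Adjacent (pCirc n p) (evenPos '' C) (oddPos '' BC))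
    (hdep : depth (pCirc n p) (oddPos '' BC) ≤ depth (pCirc n p) (evenPos '' C)) :
    nthSmall C 1 ∈ BC := by
  have hCf := Kclass_finite hp hC
  have hCne := Kclass_nonempty hp hC
  have hCsub := Kclass_subset hp hC
  have hBCsub := block_subset hp hBC
  have hBCne := block_nonempty hp hBC
  have hs1 : 1 ≤ C.ncard := (Set.ncard_pos hCf).2 hCne
  set c1 := nthSmall C 1 with hc1d
  set cs := nthSmall C C.ncard with hcsd
  have hc1m : c1 ∈ C := (nth_spec hCf le_rfl hs1).1
  have hcsm : cs ∈ C := (nth_spec hCf hs1 le_rfl).1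
  have hc1cs : c1 ≤ cs := nth_le_nth hCf le_rfl hs1 le_rfl
  obtain ⟨hc1n1, hc1n2⟩ := hCsub hc1m
  obtain ⟨hcsn1, hcsn2⟩ := hCsub hcsm
  have hNC : NonCrossing (mergeRel (pCirc n p) (oddPos '' BC) (evenPos '' C)) :=
    NonCrossing_merge_swap hadj.2.2.2
  have hKnc : NonCrossing (KI n p) := KI_noncrossing hp.1
  by_contra hc1BC
  by_cases hcA : ∃ e ∈ BC, e < c1
  · -- (β) : some element of BC left of c1
    obtain ⟨e, heBC, helt⟩ := hcA
    obtain ⟨he1, he2⟩ := hBCsub heBC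
    have hnpe : ¬ p e c1 := fun h => hc1BC (block_closed hp hBC heBC h)
    obtain ⟨g1, g2, hK, hge, hglt, hgf⟩ :=
      dual_sep hp hnc ⟨he1, he2⟩ ⟨hc1n1, hc1n2⟩ helt hnpe
    obtain ⟨hg11, hg12⟩ := hK.1
    obtain ⟨hg21, hg22⟩ := hK.2.1
    have hg1C : g1 ∉ C := by
      intro h
      have := nth_min hCf h
      omega
    have hg2C : g2 ∉ C := fun h => hg1C (Kclass_closed hp hC h (KI_symm hK))
    have hm13 : mergeRel (pCirc n p) (oddPos '' BC) (evenPos '' C) (2*e-1) (2*cs) :=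
      mergeRel_both (pCirc_self_odd (block_rel hp hBC heBC heBC))
        (pCirc_self_even (self_even hp ⟨hcsn1, hcsn2⟩))
        (Or.inl ⟨e, heBC, rfl⟩) (Or.inr ⟨cs, hcsm, rfl⟩)
    rcases hgf with hg2lt | hg2ge
    · -- g2 < e : pattern (2g2, 2e-1, 2g1, 2cs)
      exact refute_eo_l hp hBCsub hg21 hg2C (by omega)
        (hNC (2*g2) (2*e-1) (2*g1) (2*cs) (by omega) (by omega) (by omega)
          (mergeRel_of (pCirc_even_even ((Kmap_iff hp g2 g1).2 (KI_symm hK))))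
          hm13)
    · -- g2 ≥ c1
      rcases le_or_gt g2 cs with hg2cs | hg2cs
      · -- g2 in a gap of C : Kreweras noncrossing contradiction
        have hg2gt : c1 < g2 := by
          rcases Nat.eq_or_lt_of_le hg2ge with h | h
          · exact absurd (h ▸ hc1m) hg2C
          · exact h
        obtain ⟨j, hj1, hj2, hj3, hj4⟩ := locate_gap' hCf hCne (by omega) hg2gt hg2cs
        have hjm := (nth_spec hCf hj1 (by omega)).1
        have hjm1 := (nth_spec hCf (by omega : (1:ℕ) ≤ j+1) hj2).1
        have hg2lt' : g2 < nthSmall C (j+1) := by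
          rcases Nat.eq_or_lt_of_le hj4 with h | h
          · exact absurd (h ▸ hjm1) hg2C
          · exact h
        have hj1b : c1 ≤ nthSmall C j := nth_min hCf hjm
        have := hKnc g1 (nthSmall C j) g2 (nthSmall C (j+1)) (by omega) hj3 hg2lt'
          hK (Kclass_rel hp hC hjm hjm1)
        exact hg1C (Kclass_closed hp hC hjm (KI_symm this))
      · -- g2 > cs : pattern (2e-1, 2g1, 2cs, 2g2)
        exact refute_oe_r hp hBCsub hg11 hg1C (by omega)
          (hNC (2*e-1) (2*g1) (2*cs) (2*g2) (by omega) (by omega) (by omega)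
            hm13 (mergeRel_of (pCirc_even_even ((Kmap_iff hp g1 g2).2 hK))))
  · push_neg at hcA
    by_cases hcB : ∃ e ∈ BC, cs < e
    · -- (α) : some element of BC right of cs
      obtain ⟨e, heBC, helt⟩ := hcB
      obtain ⟨he1, he2⟩ := hBCsub heBC
      have hnpe : ¬ p c1 e := fun h => hc1BC (block_closed hp hBC heBC (hp.1 _ _ h))
      obtain ⟨g1, g2, hK, hge, hglt, hgf⟩ :=
        dual_sep hp hnc ⟨hc1n1, hc1n2⟩ ⟨he1, he2⟩ (by omega) hnpe
      obtain ⟨hg11, hg12⟩ := hK.1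
      obtain ⟨hg21, hg22⟩ := hK.2.1
      have hg1C : g1 ∉ C := by
        intro h
        have hg2Cm : g2 ∈ C := Kclass_closed hp hC h hK
        have h1 := nth_min hCf hg2Cm
        have h2 := nth_max hCf hg2Cm
        rcases hgf with h' | h' <;> omega
      have hg2C : g2 ∉ C := fun h => hg1C (Kclass_closed hp hC h (KI_symm hK))
      have hg1gt : c1 < g1 := by
        rcases Nat.eq_or_lt_of_le hge with h | h
        · exact absurd (h ▸ hc1m) hg1C
        · exact h
      have hm13 : mergeRel (pCirc n p) (oddPos '' BC) (evenPos '' C) (2*c1) (2*e-1) :=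
        mergeRel_both (pCirc_self_even (self_even hp ⟨hc1n1, hc1n2⟩))
          (pCirc_self_odd (block_rel hp hBC heBC heBC))
          (Or.inr ⟨c1, hc1m, rfl⟩) (Or.inl ⟨e, heBC, rfl⟩)
      rcases hgf with hg2lt | hg2ge
      · -- g2 < c1 : pattern (2g2, 2c1, 2g1, 2e-1)
        exact refute_ee_l hp hBCsub hC hg21 hg2C hc1m
          (hNC (2*g2) (2*c1) (2*g1) (2*e-1) (by omega) (by omega) (by omega)
            (mergeRel_of (pCirc_even_even ((Kmap_iff hp g2 g1).2 (KI_symm hK))))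
            hm13)
      · -- g2 ≥ e : pattern (2c1, 2g1, 2e-1, 2g2)
        exact refute_ee_r hp hBCsub hC hc1m hg11 hg1C
          (hNC (2*c1) (2*g1) (2*e-1) (2*g2) (by omega) (by omega) (by omega)
            hm13 (mergeRel_of (pCirc_even_even ((Kmap_iff hp g1 g2).2 hK))))
    · -- BC lies inside a gap of C : depth contradiction
      push_neg at hcB
      obtain ⟨e0, he0⟩ := hBCne
      have he0lo : c1 ≤ e0 := hcA e0 he0
      have he0hi : e0 ≤ cs := hcB e0 he0
      have he0gt : c1 < e0 := by
        rcases Nat.eq_or_lt_of_le he0lo with h | h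
        · exact absurd (h ▸ he0) hc1BC
        · exact h
      obtain ⟨j, hj1, hj2, hj3, hj4⟩ := locate_gap' hCf hCne (by omega) he0gt he0hi
      have hjm := (nth_spec hCf hj1 (by omega)).1
      have hjm1 := (nth_spec hCf (by omega : (1:ℕ) ≤ j+1) hj2).1
      have hj1b : c1 ≤ nthSmall C j := nth_min hCf hjm
      have hjrb : nthSmall C (j+1) ≤ cs := nth_max hCf hjm1
      have hrespj := (Kclass_rel hp hC hjm hjm1).2.2
      have hjlt : nthSmall C j < nthSmall C (j+1) := nth_lt_nth hCf hj1 (by omega) hj2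
      have hgap : ∀ e ∈ BC, nthSmall C j < e ∧ e ≤ nthSmall C (j+1) := by
        intro e he
        have := hrespj e0 e (block_rel hp hBC he0 he) (by
          unfold In2
          rw [(by omega : min (nthSmall C j) (nthSmall C (j+1)) = nthSmall C j),
            (by omega : max (nthSmall C j) (nthSmall C (j+1)) = nthSmall C (j+1))]
          omega)
        unfold In2 at this
        rw [(by omega : min (nthSmall C j) (nthSmall C (j+1)) = nthSmall C j),
          (by omega : max (nthSmall C j) (nthSmall C (j+1)) = nthSmall C (j+1))] at this
        exact this
      have hNest : Nested (oddPos '' BC) (evenPos '' C) := by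
        constructor
        · have h1 : sInf (evenPos '' C) ≤ 2*c1 := Nat.sInf_le ⟨c1, hc1m, rfl⟩
          have h2 : sInf (oddPos '' BC) ∈ oddPos '' BC :=
            Nat.sInf_mem ⟨oddPos e0, e0, he0, rfl⟩
          obtain ⟨e, he, heq⟩ := h2
          have heq' : 2*e - 1 = sInf (oddPos '' BC) := heq
          have := (hgap e he).1
          omega
        · have hbddO : BddAbove (oddPos '' BC) := by
            refine ⟨2*n, ?_⟩
            rintro w ⟨u, hu, rfl⟩
            have := hBCsub hu
            simp only [Idx, mem_Icc] at this
            simp only [oddPos]; omega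
          have hbddE : BddAbove (evenPos '' C) := by
            refine ⟨2*n, ?_⟩
            rintro w ⟨u, hu, rfl⟩
            have := hCsub hu
            simp only [Idx, mem_Icc] at this
            simp only [evenPos]; omega
          have h1 : 2*cs ≤ sSup (evenPos '' C) := le_csSup hbddE ⟨cs, hcsm, rfl⟩
          have h2 : sSup (oddPos '' BC) ∈ oddPos '' BC :=
            Nat.sSup_mem ⟨oddPos e0, e0, he0, rfl⟩ hbddO
          obtain ⟨e, he, heq⟩ := h2
          have heq' : 2*e - 1 = sSup (oddPos '' BC) := heq
          have h3 := (hgap e he).2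
          have h4 := (hBCsub he).1
          omega
      have := depth_lt_of_nested hadj.1 hadj.2.1 hNest
      omega

/-- `B^C_i` contains the `(i+1)`-st smallest element of `C`. -/
lemma ci1_mem_BCi (hp : IsPartitionOn (Idx n) p) (hnc : NonCrossing p)
    {C : Set ℕ} (hC : IsBlock (Kmap n p) C) {i : ℕ} (hi1 : 1 ≤ i) (hi2 : i + 1 ≤ C.ncard)
    {BCi : Set ℕ} (hBCi : IsBlock p BCi)
    (hadj : Adjacent (pCirc n p) (evenPos '' C) (oddPos '' BCi))
    (hpos : ∀ x ∈ oddPos '' BCi,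
      evenPos (nthSmall C i) < x ∧ x < evenPos (nthSmall C (i + 1))) :
    nthSmall C (i+1) ∈ BCi := by
  have hCf := Kclass_finite hp hC
  have hCsub := Kclass_subset hp hC
  have hBCsub := block_subset hp hBCi
  have hBCne := block_nonempty hp hBCi
  set ci := nthSmall C i with hcid
  set ci1 := nthSmall C (i+1) with hci1d
  have hcim : ci ∈ C := (nth_spec hCf hi1 (by omega)).1
  have hci1m : ci1 ∈ C := (nth_spec hCf (by omega : (1:ℕ) ≤ i+1) hi2).1
  have hcilt : ci < ci1 := nth_lt_nth hCf hi1 (by omega) hi2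
  obtain ⟨hcin1, hcin2⟩ := hCsub hcim
  obtain ⟨hci1n1, hci1n2⟩ := hCsub hci1m
  have hNC : NonCrossing (mergeRel (pCirc n p) (oddPos '' BCi) (evenPos '' C)) :=
    NonCrossing_merge_swap hadj.2.2.2
  have hKnc : NonCrossing (KI n p) := KI_noncrossing hp.1
  have hposc : ∀ e ∈ BCi, ci < e ∧ e ≤ ci1 := by
    intro e he
    have := hpos (oddPos e) ⟨e, he, rfl⟩
    have h1 := (hBCsub he).1
    simp only [oddPos, evenPos] at this
    omega
  by_contra hci1BC
  obtain ⟨e0, he0⟩ := hBCne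
  obtain ⟨he0lo, he0hi⟩ := hposc e0 he0
  obtain ⟨he01, he02⟩ := hBCsub he0
  have he0lt : e0 < ci1 := by
    rcases Nat.eq_or_lt_of_le he0hi with h | h
    · exact absurd (h ▸ he0) hci1BC
    · exact h
  have hnpe : ¬ p e0 ci1 := fun h => hci1BC (block_closed hp hBCi he0 h)
  obtain ⟨g1, g2, hK, hge, hglt, hgf⟩ :=
    dual_sep hp hnc ⟨he01, he02⟩ ⟨hci1n1, hci1n2⟩ he0lt hnpe
  obtain ⟨hg11, hg12⟩ := hK.1
  obtain ⟨hg21, hg22⟩ := hK.2.1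
  have hg1C : g1 ∉ C := by
    intro h
    have := nth_gap hCf hi1 hi2 h (by omega : ci < g1)
    omega
  have hg2C : g2 ∉ C := fun h => hg1C (Kclass_closed hp hC h (KI_symm hK))
  rcases hgf with hg2lt | hg2ge
  · -- g2 < e0 : pattern (2g2, 2e0-1, 2g1, 2ci1)
    have hm24 : mergeRel (pCirc n p) (oddPos '' BCi) (evenPos '' C) (2*e0-1) (2*ci1) :=
      mergeRel_both (pCirc_self_odd (block_rel hp hBCi he0 he0))
        (pCirc_self_even (self_even hp ⟨hci1n1, hci1n2⟩))
        (Or.inl ⟨e0, he0, rfl⟩) (Or.inr ⟨ci1, hci1m, rfl⟩)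
    exact refute_eo_l hp hBCsub hg21 hg2C (by omega)
      (hNC (2*g2) (2*e0-1) (2*g1) (2*ci1) (by omega) (by omega) (by omega)
        (mergeRel_of (pCirc_even_even ((Kmap_iff hp g2 g1).2 (KI_symm hK))))
        hm24)
  · -- g2 ≥ ci1 : Kreweras noncrossing contradiction
    have hg2gt : ci1 < g2 := by
      rcases Nat.eq_or_lt_of_le hg2ge with h | h
      · exact absurd (h ▸ hci1m) hg2C
      · exact h
    have := hKnc ci g1 ci1 g2 (by omega) (by omega) hg2gt
      (Kclass_rel hp hC hcim hci1m) hK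
    exact hg1C (Kclass_closed hp hC hcim this)

end Aux9

section Aux10
open Set

variable {n : ℕ} {p : ℕ → ℕ → Prop}

lemma merge_symm (hp : IsPartitionOn (Idx n) p) (X Y : Set ℕ) :
    ∀ a b, mergeRel p X Y a b → mergeRel p X Y b a := by
  rintro a b (h | ⟨h1, h2, h3, h4⟩)
  · exact Or.inl (hp.1 _ _ h)
  · exact Or.inr ⟨h2, h1, h4, h3⟩

lemma merge_supp (hp : IsPartitionOn (Idx n) p) (X Y : Set ℕ) :
    ∀ a b, mergeRel p X Y a b → a ∈ Idx n ∧ b ∈ Idx n := by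
  rintro a b (h | ⟨h1, h2, -, -⟩)
  · exact ⟨rel_mem_left hp h, rel_mem_right hp h⟩
  · exact ⟨(hp.2.2 a).1 h1, (hp.2.2 b).1 h2⟩

/-- Main equivalence, second half. -/
lemma half2 (hp : IsPartitionOn (Idx n) p) (hnc : NonCrossing p)
    {C : Set ℕ} (hC : IsBlock (Kmap n p) C) {i : ℕ} (hi1 : 1 ≤ i) (hi2 : i ≤ C.ncard - 1)
    {BC : Set ℕ} (hBC : IsBlock p BC)
    (hadjBC : Adjacent (pCirc n p) (evenPos '' C) (oddPos '' BC))
    (hdepBC : depth (pCirc n p) (oddPos '' BC) ≤ depth (pCirc n p) (evenPos '' C))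
    {BCi : Set ℕ} (hBCi : IsBlock p BCi)
    (hadjBCi : Adjacent (pCirc n p) (evenPos '' C) (oddPos '' BCi))
    (hpos : ∀ x ∈ oddPos '' BCi,
      evenPos (nthSmall C i) < x ∧ x < evenPos (nthSmall C (i + 1))) :
    splitRel (Kmap n p) C i = Kmap n (mergeRel p BC BCi) := by
  have hCf := Kclass_finite hp hC
  have hCne := Kclass_nonempty hp hC
  have hCsub := Kclass_subset hp hC
  have hBCsub := block_subset hp hBC
  have hBCisub := block_subset hp hBCi
  have hs1 : 1 ≤ C.ncard := (Set.ncard_pos hCf).2 hCne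
  have hi2' : i + 1 ≤ C.ncard := by omega
  set c1 := nthSmall C 1 with hc1d
  set ci := nthSmall C i with hcid
  set ci1 := nthSmall C (i+1) with hci1d
  set cs := nthSmall C C.ncard with hcsd
  have hc1m : c1 ∈ C := (nth_spec hCf le_rfl hs1).1
  have hcim : ci ∈ C := (nth_spec hCf hi1 (by omega)).1
  have hci1m : ci1 ∈ C := (nth_spec hCf (by omega : (1:ℕ) ≤ i+1) hi2').1
  have hcsm : cs ∈ C := (nth_spec hCf hs1 le_rfl).1
  have hc1ci : c1 ≤ ci := nth_le_nth hCf le_rfl hi1 (by omega)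
  have hcici1 : ci < ci1 := nth_lt_nth hCf hi1 (by omega) hi2'
  have hci1cs : ci1 ≤ cs := nth_le_nth hCf (by omega) hi2' le_rfl
  have hcics : ci ≤ cs := by omega
  obtain ⟨hc1n1, hc1n2⟩ := hCsub hc1m
  obtain ⟨hcin1, hcin2⟩ := hCsub hcim
  obtain ⟨hci1n1, hci1n2⟩ := hCsub hci1m
  obtain ⟨hcsn1, hcsn2⟩ := hCsub hcsm
  have hc1BC : c1 ∈ BC := c1_mem_BC hp hnc hC hBC hadjBC hdepBC
  have hci1BCi : ci1 ∈ BCi := ci1_mem_BCi hp hnc hC hi1 hi2' hBCi hadjBCi hpos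
  have hlowC : ∀ x, x ∈ lowerPart C i ↔ x ∈ C ∧ x ≤ ci :=
    fun x => mem_lowerPart_iff hCf hi1 (by omega)
  have huppC : ∀ x, x ∈ upperPart C i ↔ x ∈ C ∧ ci1 ≤ x :=
    fun x => mem_upperPart_iff hCf hi1 hi2'
  have hgapC : ∀ u ∈ C, u ≤ ci ∨ ci1 ≤ u := by
    intro u hu
    rcases Nat.lt_or_ge ci u with h | h
    · exact Or.inr (nth_gap hCf hi1 hi2' hu h)
    · exact Or.inl h
  have hKnc : NonCrossing (KI n p) := KI_noncrossing hp.1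
  have hKci : KI n p ci ci1 := Kclass_rel hp hC hcim hci1m
  funext x y
  apply propext
  rw [Kmap_iff_KI (merge_supp hp BC BCi) (merge_symm hp BC BCi)]
  constructor
  · -- LHS → RHS
    rintro ⟨hKxy, hside⟩
    obtain ⟨hxI, hyI, hrespP⟩ := (Kmap_iff hp x y).1 hKxy
    obtain ⟨hx1, hx2⟩ := hxI
    obtain ⟨hy1, hy2⟩ := hyI
    have hKmM : KI n p (min x y) (max x y) := by
      rcases (by omega : (min x y = x ∧ max x y = y) ∨ (min x y = y ∧ max x y = x)) with
        ⟨h1, h2⟩ | ⟨h1, h2⟩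
      · rw [h1, h2]; exact ⟨⟨hx1, hx2⟩, ⟨hy1, hy2⟩, hrespP⟩
      · rw [h1, h2]; exact KI_symm ⟨⟨hx1, hx2⟩, ⟨hy1, hy2⟩, hrespP⟩
    have hset : ∀ u w, p u w → (In2 x y u ↔ In2 x y w) := by
      intro u w huw
      exact ⟨fun h => hrespP u w huw h, fun h => hrespP w u (hp.1 _ _ huw) h⟩
    -- contradiction block 1 : In2 c1 ∧ ¬ In2 ci1
    have hcontra1 : In2 x y c1 → ¬ In2 x y ci1 → False := by
      intro hin1 hnin1
      unfold In2 at hin1 hnin1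
      rcases hside with ⟨hxl, hyl⟩ | ⟨hxu, hyu⟩ | ⟨hxC, hyC⟩
      · obtain ⟨hxC, -⟩ := (hlowC x).1 hxl
        obtain ⟨hyC, -⟩ := (hlowC y).1 hyl
        have h1 := nth_min hCf hxC
        have h2 := nth_min hCf hyC
        omega
      · obtain ⟨hxC, -⟩ := (huppC x).1 hxu
        obtain ⟨hyC, -⟩ := (huppC y).1 hyu
        have h1 := nth_min hCf hxC
        have h2 := nth_min hCf hyC
        omega
      · -- x, y ∉ C
        have hmC : min x y ∉ C := by
          rcases (by omega : min x y = x ∨ min x y = y) with h | h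
          · rw [h]; exact hxC
          · rw [h]; exact hyC
        have hMC : max x y ∉ C := by
          rcases (by omega : max x y = x ∨ max x y = y) with h | h
          · rw [h]; exact hxC
          · rw [h]; exact hyC
        have hMgt : c1 < max x y := by
          rcases Nat.eq_or_lt_of_le (by omega : c1 ≤ max x y) with h | h
          · exact absurd (h ▸ hc1m) hMC
          · exact h
        obtain ⟨j, hj1, hj2, hj3, hj4⟩ := locate_gap hCf hCne (x := max x y)
          (by omega) (by omega)
        have hjm := (nth_spec hCf hj1 (by omega)).1
        have hjm1 := (nth_spec hCf (by omega : (1:ℕ) ≤ j+1) hj2).1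
        have hj3' : nthSmall C j < max x y := by
          rcases Nat.eq_or_lt_of_le hj3 with h | h
          · exact absurd (h ▸ hjm) hMC
          · exact h
        have hj1b : c1 ≤ nthSmall C j := nth_min hCf hjm
        have := hKnc (min x y) (nthSmall C j) (max x y) (nthSmall C (j+1))
          (by omega) hj3' hj4 hKmM (Kclass_rel hp hC hjm hjm1)
        exact hmC (Kclass_closed hp hC hjm (KI_symm this))
    -- contradiction block 2 : In2 ci1 ∧ ¬ In2 c1
    have hcontra2 : In2 x y ci1 → ¬ In2 x y c1 → False := by
      intro hin1 hnin1
      unfold In2 at hin1 hnin1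
      have hc1le : c1 ≤ min x y := by omega
      rcases hside with ⟨hxl, hyl⟩ | ⟨hxu, hyu⟩ | ⟨hxC, hyC⟩
      · obtain ⟨hxC, hxle⟩ := (hlowC x).1 hxl
        obtain ⟨hyC, hyle⟩ := (hlowC y).1 hyl
        omega
      · obtain ⟨hxC, hxge⟩ := (huppC x).1 hxu
        obtain ⟨hyC, hyge⟩ := (huppC y).1 hyu
        omega
      · have hmC : min x y ∉ C := by
          rcases (by omega : min x y = x ∨ min x y = y) with h | h
          · rw [h]; exact hxC
          · rw [h]; exact hyC
        have hMC : max x y ∉ C := by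
          rcases (by omega : max x y = x ∨ max x y = y) with h | h
          · rw [h]; exact hxC
          · rw [h]; exact hyC
        have hmgt : c1 < min x y := by
          rcases Nat.eq_or_lt_of_le hc1le with h | h
          · exact absurd (h ▸ hc1m) hmC
          · exact h
        rcases Nat.lt_or_ge ci (min x y) with hcim' | hcim'
        · -- ci < m
          have hMgt : ci1 < max x y := by
            rcases Nat.eq_or_lt_of_le (by omega : ci1 ≤ max x y) with h | h
            · exact absurd (h ▸ hci1m) hMC
            · exact h
          have := hKnc ci (min x y) ci1 (max x y) hcim' (by omega) hMgt
            hKci hKmM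
          exact hmC (Kclass_closed hp hC hcim this)
        · -- m ≤ ci
          have hmlt : min x y < ci := by
            rcases Nat.eq_or_lt_of_le hcim' with h | h
            · exact absurd (h.symm ▸ hcim) hmC
            · exact h
          obtain ⟨j, hj1, hj2, hj3, hj4⟩ := locate_gap hCf hCne (x := min x y)
            (by omega) (by omega)
          have hjm := (nth_spec hCf hj1 (by omega)).1
          have hjm1 := (nth_spec hCf (by omega : (1:ℕ) ≤ j+1) hj2).1
          have hj3' : nthSmall C j < min x y := by
            rcases Nat.eq_or_lt_of_le hj3 with h | h
            · exact absurd (h ▸ hjm) hmC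
            · exact h
          have hcij : nthSmall C (j+1) ≤ ci :=
            nth_gap hCf hj1 hj2 hcim (by omega)
          have := hKnc (nthSmall C j) (min x y) (nthSmall C (j+1)) (max x y)
            hj3' hj4 (by omega) (Kclass_rel hp hC hjm hjm1) hKmM
          exact hmC (Kclass_closed hp hC hjm this)
    refine ⟨⟨hx1, hx2⟩, ⟨hy1, hy2⟩, ?_⟩
    intro u v huv hin
    rcases huv with hpuv | ⟨huu, hvv, hum, hvm⟩
    · exact hrespP u v hpuv hin
    · rcases hum with huBC | huBCi <;> rcases hvm with hvBC | hvBCi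
      · exact hrespP u v (block_rel hp hBC huBC hvBC) hin
      · -- u ∈ BC, v ∈ BCi
        by_contra hninv
        exact hcontra1 ((hset u c1 (block_rel hp hBC huBC hc1BC)).1 hin)
          (fun h => hninv ((hset ci1 v (block_rel hp hBCi hci1BCi hvBCi)).1 h))
      · -- u ∈ BCi, v ∈ BC
        by_contra hninv
        exact hcontra2 ((hset u ci1 (block_rel hp hBCi huBCi hci1BCi)).1 hin)
          (fun h => hninv ((hset c1 v (block_rel hp hBC hc1BC hvBC)).1 h))
      · exact hrespP u v (block_rel hp hBCi huBCi hvBCi) hin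
  · -- RHS → LHS
    rintro ⟨hxI, hyI, hrespM⟩
    obtain ⟨hx1, hx2⟩ := hxI
    obtain ⟨hy1, hy2⟩ := hyI
    have hrespP : Resp p x y := fun u v huv hin => hrespM u v (Or.inl huv) hin
    have hKIxy : KI n p x y := ⟨⟨hx1, hx2⟩, ⟨hy1, hy2⟩, hrespP⟩
    refine ⟨(Kmap_iff hp x y).2 hKIxy, ?_⟩
    by_cases hxC : x ∈ C
    · have hyC : y ∈ C := Kclass_closed hp hC hxC hKIxy
      rcases hgapC x hxC with hxlo | hxhi <;> rcases hgapC y hyC with hylo | hyhi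
      · exact Or.inl ⟨(hlowC x).2 ⟨hxC, hxlo⟩, (hlowC y).2 ⟨hyC, hylo⟩⟩
      · -- x ≤ ci, y ≥ ci1 : impossible
        exfalso
        have hmin : c1 ≤ min x y := by
          have h1 := nth_min hCf hxC
          have h2 := nth_min hCf hyC
          omega
        have := hrespM ci1 c1
          (Or.inr ⟨(hp.2.2 ci1).2 ⟨hci1n1, hci1n2⟩, (hp.2.2 c1).2 ⟨hc1n1, hc1n2⟩,
            Or.inr hci1BCi, Or.inl hc1BC⟩)
          (by unfold In2; omega)
        unfold In2 at this
        omega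
      · exfalso
        have hmin : c1 ≤ min x y := by
          have h1 := nth_min hCf hxC
          have h2 := nth_min hCf hyC
          omega
        have := hrespM ci1 c1
          (Or.inr ⟨(hp.2.2 ci1).2 ⟨hci1n1, hci1n2⟩, (hp.2.2 c1).2 ⟨hc1n1, hc1n2⟩,
            Or.inr hci1BCi, Or.inl hc1BC⟩)
          (by unfold In2; omega)
        unfold In2 at this
        omega
      · exact Or.inr (Or.inl ⟨(huppC x).2 ⟨hxC, hxhi⟩, (huppC y).2 ⟨hyC, hyhi⟩⟩)
    · have hyC : y ∉ C := fun hyC => hxC (Kclass_closed hp hC hyC (KI_symm hKIxy))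
      exact Or.inr (Or.inr ⟨hxC, hyC⟩)

end Aux10
/-- `K(p_{B,i}) = K(p)_{C^B, C^B_i}` and, dually,
`K(p)_{C,i} = K(p_{B^C, B^C_i})`. The enveloping blocks `C^B`, `C^B_i`
(resp. `B^C`, `B^C_i`) are quantified through their defining properties:
blocks of `K(p)` (resp. of `p`) adjacent to `B` (resp. `C`) in `p°`, of depth
at most (resp. strictly larger than) that of `B` (resp. `C`), the lower ones
lying strictly between the positions of the `i`-th and `(i+1)`-th smallest
elements of the given block. -/
theorem kreweras_split_merge
    (n : ℕ) (p : ℕ → ℕ → Prop)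
    (hp : IsPartitionOn (Idx n) p) (hnc : NonCrossing p) :
    (∀ B : Set ℕ, IsBlock p B → ∀ i, 1 ≤ i → i ≤ B.ncard - 1 →
      ∀ CB : Set ℕ, IsBlock (Kmap n p) CB →
        Adjacent (pCirc n p) (oddPos '' B) (evenPos '' CB) →
        depth (pCirc n p) (evenPos '' CB) ≤ depth (pCirc n p) (oddPos '' B) →
      ∀ CBi : Set ℕ, IsBlock (Kmap n p) CBi →
        Adjacent (pCirc n p) (oddPos '' B) (evenPos '' CBi) →
        depth (pCirc n p) (oddPos '' B) < depth (pCirc n p) (evenPos '' CBi) →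
        (∀ x ∈ evenPos '' CBi,
          oddPos (nthSmall B i) < x ∧ x < oddPos (nthSmall B (i + 1))) →
      Kmap n (splitRel p B i) = mergeRel (Kmap n p) CB CBi) ∧
    (∀ C : Set ℕ, IsBlock (Kmap n p) C → ∀ i, 1 ≤ i → i ≤ C.ncard - 1 →
      ∀ BC : Set ℕ, IsBlock p BC →
        Adjacent (pCirc n p) (evenPos '' C) (oddPos '' BC) →
        depth (pCirc n p) (oddPos '' BC) ≤ depth (pCirc n p) (evenPos '' C) →
      ∀ BCi : Set ℕ, IsBlock p BCi →
        Adjacent (pCirc n p) (evenPos '' C) (oddPos '' BCi) →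
        depth (pCirc n p) (evenPos '' C) < depth (pCirc n p) (oddPos '' BCi) →
        (∀ x ∈ oddPos '' BCi,
          evenPos (nthSmall C i) < x ∧ x < evenPos (nthSmall C (i + 1))) →
      splitRel (Kmap n p) C i = Kmap n (mergeRel p BC BCi)) := by
  constructor
  · intro B hB i hi1 hi2 CB hCB hadjB hdepB CBi hCBi hadji hdepi hpos
    exact half1 hp hnc hB hi1 hi2 hCB hadjB hdepB hCBi hadji hdepi hpos
  · intro C hC i hi1 hi2 BC hBC hadjBC hdepBC BCi hBCi hadjBCi hdepBCi hpos
    exact half2 hp hnc hC hi1 hi2 hBC hadjBC hdepBC hBCi hadjBCi hpos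

end NCPaper
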